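/- arXiv:1310.2168 — 7 statements merged into one kernel-verified Lean document; each statement's English description precedes it below -/
import Mathlib

section
/- Let n ≥ 2 and let ζ ∈ ℂ be a primitive n-th root of unity. Then there exist a, b ∈ SU(n) with a b a⁻¹ b⁻¹ = ζ·I and such that the centralizer of {a,b} in SU(n) equals the center of SU(n), i.e. every g ∈ SU(n) commuting with both a and b is of the form ω·I with ωⁿ = 1. -/
open Matrix

private lemma conj_mul_self_eq_one {z w : ℂ} {n : ℕ} (hn : n ≠ 0)
    (hw : (starRingEnd ℂ) w * w = 1) (hz : z ^ n = w) :
    (starRingEnd ℂ) z * z = 1 := by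
  have h2 : (starRingEnd ℂ) z * z = (Complex.normSq z : ℂ) := by
    rw [mul_comm, Complex.mul_conj]
  have h1 : ((Complex.normSq z : ℝ) : ℂ) ^ n = 1 := by
    rw [← h2, mul_pow, ← map_pow, hz, hw]
  have h1' : (Complex.normSq z) ^ n = 1 := by exact_mod_cast h1
  have h0 : 0 ≤ Complex.normSq z := Complex.normSq_nonneg z
  rw [h2]
  norm_cast
  set r := Complex.normSq z with hr
  lift r to NNReal using h0 with s
  have hs : s ^ n = 1 := by exact_mod_cast h1'
  have : s = 1 := (pow_eq_one_iff_of_nonneg (a := s) (by positivity) hn).mp hs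
  exact_mod_cast this

private lemma smul_mem_unitaryGroup {n : ℕ} {A : Matrix (Fin n) (Fin n) ℂ} {c : ℂ}
    (hc : (starRingEnd ℂ) c * c = 1) (hA : A ∈ Matrix.unitaryGroup (Fin n) ℂ) :
    c • A ∈ Matrix.unitaryGroup (Fin n) ℂ := by
  rw [Matrix.mem_unitaryGroup_iff'] at hA ⊢
  rw [star_smul, smul_mul_smul_comm, hA, show (star c : ℂ) = (starRingEnd ℂ) c from rfl,
    hc, one_smul]

/-- For `n ≥ 2` and `ζ` a primitive `n`-th root of unity, there is a pair `a, b` in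
`SU(n)` (elements of the unitary group of determinant `1`) whose commutator is `ζ·I`
and whose centralizer in `SU(n)` is exactly the center `{ω·I : ωⁿ = 1}`. -/
theorem exists_irreducible_pair_SU
    (n : ℕ) (hn : 2 ≤ n) (ζ : ℂ) (hζ : IsPrimitiveRoot ζ n) :
    ∃ a b : Matrix.unitaryGroup (Fin n) ℂ,
      Matrix.det (a : Matrix (Fin n) (Fin n) ℂ) = 1 ∧
      Matrix.det (b : Matrix (Fin n) (Fin n) ℂ) = 1 ∧
      ((a * b * a⁻¹ * b⁻¹ : Matrix.unitaryGroup (Fin n) ℂ) : Matrix (Fin n) (Fin n) ℂ)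
        = ζ • (1 : Matrix (Fin n) (Fin n) ℂ) ∧
      ∀ g : Matrix.unitaryGroup (Fin n) ℂ,
        Matrix.det (g : Matrix (Fin n) (Fin n) ℂ) = 1 →
        g * a = a * g → g * b = b * g →
        ∃ ω : ℂ, ω ^ n = 1 ∧
          (g : Matrix (Fin n) (Fin n) ℂ) = ω • (1 : Matrix (Fin n) (Fin n) ℂ) := by
  haveI : NeZero n := ⟨by omega⟩
  have hn0 : n ≠ 0 := by omega
  have hζn : ζ ^ n = 1 := hζ.pow_eq_one
  have hsub : ∀ i : Fin n, ((i - 1 : Fin n) : ℕ) = if i = 0 then n - 1 else (i : ℕ) - 1 := by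
    obtain ⟨m, rfl⟩ : ∃ m, n = m + 1 := ⟨n - 1, by omega⟩
    intro i
    rw [Fin.coe_sub_one]
    simp
  have hζ0 : ζ ≠ 0 := by
    intro h; rw [h, zero_pow hn0] at hζn; exact zero_ne_one hζn
  have hζu : (starRingEnd ℂ) ζ * ζ = 1 :=
    conj_mul_self_eq_one hn0 (by simp) hζn
  -- the diagonal matrix
  set d : Fin n → ℂ := fun i => ζ ^ (i : ℕ) with hd
  set D : Matrix (Fin n) (Fin n) ℂ := Matrix.diagonal d with hD
  have hdu : ∀ i : Fin n, (starRingEnd ℂ) (d i) * d i = 1 := by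
    intro i
    rw [hd]
    dsimp only
    rw [map_pow, ← mul_pow, hζu, one_pow]
  have hDmem : D ∈ Matrix.unitaryGroup (Fin n) ℂ := by
    rw [Matrix.mem_unitaryGroup_iff, hD, Matrix.star_eq_conjTranspose,
      Matrix.diagonal_conjTranspose, Matrix.diagonal_mul_diagonal]
    have : (fun i => d i * (star d) i) = fun _ => (1 : ℂ) := by
      funext i
      rw [Pi.star_apply, mul_comm]
      exact hdu i
    rw [this, Matrix.diagonal_one]
  -- the permutation matrix
  set σ : Equiv.Perm (Fin n) := Equiv.subRight 1 with hσ
  set P : Matrix (Fin n) (Fin n) ℂ := σ.permMatrix ℂ with hPdef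
  have hPapp : ∀ i j, P i j = if σ i = j then 1 else 0 := by
    intro i j
    rw [hPdef]
    simp [Equiv.Perm.permMatrix, PEquiv.toMatrix_apply, Equiv.toPEquiv_apply, eq_comm]
  have hPmem : P ∈ Matrix.unitaryGroup (Fin n) ℂ := by
    rw [Matrix.mem_unitaryGroup_iff]
    ext i j
    rw [Matrix.mul_apply, Matrix.one_apply]
    simp only [Matrix.star_eq_conjTranspose, Matrix.conjTranspose_apply, hPapp]
    rw [Finset.sum_eq_single (σ i)]
    · by_cases h : i = j
      · subst h; simp
      · have : σ i ≠ σ j := fun hc => h (σ.injective hc)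
        simp [this.symm, h]
    · intro k _ hk
      simp [Ne.symm hk]
    · intro h; exact absurd (Finset.mem_univ _) h
  -- the key exponent identity
  have hkey : ∀ i : Fin n, d i = ζ * d (i - 1) := by
    intro i
    rw [hd]
    dsimp only
    rcases eq_or_ne i 0 with h | h
    · subst h
      rw [hsub, if_pos rfl]
      rw [Fin.val_zero, pow_zero, ← pow_succ']
      rw [show n - 1 + 1 = n by omega, hζn]
    · rw [hsub, if_neg h, ← pow_succ']
      congr 1
      have : (i : ℕ) ≠ 0 := fun hc => h (Fin.ext hc)
      omega
  -- key commutation: D * P = ζ • (P * D)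
  have hDP : D * P = ζ • (P * D) := by
    ext i j
    rw [hD, Matrix.smul_apply, Matrix.diagonal_mul, Matrix.mul_diagonal]
    rw [hPapp]
    by_cases h : σ i = j
    · rw [if_pos h, mul_one, one_mul, ← h]
      rw [show σ i = i - 1 from rfl]
      exact hkey i
    · rw [if_neg h, mul_zero, zero_mul, smul_zero]
  -- determinants are nonzero units on the circle
  have hDdet : (starRingEnd ℂ) (Matrix.det D) * Matrix.det D = 1 :=
    (Matrix.det_of_mem_unitary hDmem).1
  have hPdet : (starRingEnd ℂ) (Matrix.det P) * Matrix.det P = 1 :=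
    (Matrix.det_of_mem_unitary hPmem).1
  have hDdet0 : Matrix.det D ≠ 0 := by
    intro h; rw [h, mul_zero] at hDdet; exact zero_ne_one hDdet
  have hPdet0 : Matrix.det P ≠ 0 := by
    intro h; rw [h, mul_zero] at hPdet; exact zero_ne_one hPdet
  have hDdetinv : (starRingEnd ℂ) (Matrix.det D)⁻¹ * (Matrix.det D)⁻¹ = 1 := by
    rw [map_inv₀, ← mul_inv, hDdet, inv_one]
  have hPdetinv : (starRingEnd ℂ) (Matrix.det P)⁻¹ * (Matrix.det P)⁻¹ = 1 := by
    rw [map_inv₀, ← mul_inv, hPdet, inv_one]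
  obtain ⟨α, hα⟩ := IsAlgClosed.exists_pow_nat_eq (Matrix.det D)⁻¹ (show 0 < n by omega)
  obtain ⟨β, hβ⟩ := IsAlgClosed.exists_pow_nat_eq (Matrix.det P)⁻¹ (show 0 < n by omega)
  have hαu : (starRingEnd ℂ) α * α = 1 := conj_mul_self_eq_one hn0 hDdetinv hα
  have hβu : (starRingEnd ℂ) β * β = 1 := conj_mul_self_eq_one hn0 hPdetinv hβ
  have hα0 : α ≠ 0 := by
    intro h; rw [h, map_zero, zero_mul] at hαu; exact zero_ne_one hαu
  have hβ0 : β ≠ 0 := by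
    intro h; rw [h, map_zero, zero_mul] at hβu; exact zero_ne_one hβu
  set A : Matrix (Fin n) (Fin n) ℂ := α • D with hA
  set B : Matrix (Fin n) (Fin n) ℂ := β • P with hB
  have hAmem : A ∈ Matrix.unitaryGroup (Fin n) ℂ := smul_mem_unitaryGroup hαu hDmem
  have hBmem : B ∈ Matrix.unitaryGroup (Fin n) ℂ := smul_mem_unitaryGroup hβu hPmem
  refine ⟨⟨A, hAmem⟩, ⟨B, hBmem⟩, ?_, ?_, ?_, ?_⟩
  · show Matrix.det A = 1
    rw [hA, Matrix.det_smul, Fintype.card_fin, hα, inv_mul_cancel₀ hDdet0]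
  · show Matrix.det B = 1
    rw [hB, Matrix.det_smul, Fintype.card_fin, hβ, inv_mul_cancel₀ hPdet0]
  · -- the commutator
    have h1 : A * B = ζ • (B * A) := by
      rw [hA, hB, smul_mul_smul_comm, smul_mul_smul_comm, hDP, smul_smul, smul_smul]
      congr 1
      ring
    have hA1 : A * star A = 1 := hAmem.2
    have hB1 : B * star B = 1 := hBmem.2
    show A * B * star A * star B = ζ • (1 : Matrix (Fin n) (Fin n) ℂ)
    rw [h1, smul_mul_assoc, smul_mul_assoc, mul_assoc B A (star A), hA1, mul_one, hB1]
  · -- centralizer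
    intro g hdetg hga hgb
    set G : Matrix (Fin n) (Fin n) ℂ := (g : Matrix (Fin n) (Fin n) ℂ) with hG
    have hGA : G * A = A * G := congrArg Subtype.val hga
    have hGB : G * B = B * G := congrArg Subtype.val hgb
    have hGD : G * D = D * G := by
      rw [hA, mul_smul_comm, smul_mul_assoc] at hGA
      exact smul_right_injective _ hα0 hGA
    have hGP : G * P = P * G := by
      rw [hB, mul_smul_comm, smul_mul_assoc] at hGB
      exact smul_right_injective _ hβ0 hGB
    have hdiag : ∀ i j, i ≠ j → G i j = 0 := by
      intro i j hij
      have h := congrFun (congrFun hGD i) j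
      rw [hD] at h
      rw [show (G * Matrix.diagonal d) i j = G i j * d j from Matrix.mul_diagonal _ _ _ _,
        show (Matrix.diagonal d * G) i j = d i * G i j from Matrix.diagonal_mul _ _ _ _] at h
      have hdij : d j ≠ d i := by
        intro he
        refine hij (Fin.ext ?_)
        exact (hζ.pow_inj i.isLt j.isLt (he.symm : d i = d j)).symm ▸ rfl
      have h0 : G i j * (d j - d i) = 0 := by
        rw [mul_sub, h]; ring
      rcases mul_eq_zero.mp h0 with h1 | h1
      · exact h1
      · exact absurd (sub_eq_zero.mp h1) hdij
    have hstep : ∀ i : Fin n, G i i = G (i - 1) (i - 1) := by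
      intro i
      have h := congrFun (congrFun hGP i) (i - 1)
      rw [Matrix.mul_apply, Matrix.mul_apply] at h
      rw [Finset.sum_eq_single i (fun k _ hk => by rw [hdiag i k (Ne.symm hk), zero_mul])
        (fun hi => absurd (Finset.mem_univ _) hi)] at h
      rw [Finset.sum_eq_single (i - 1)
        (fun k _ hk => by rw [hdiag k (i - 1) hk, mul_zero])
        (fun hi => absurd (Finset.mem_univ _) hi)] at h
      rw [hPapp] at h
      rw [if_pos (show σ i = i - 1 from rfl), mul_one, one_mul] at h
      exact h
    have hstep' : ∀ j : Fin n, G (j + 1) (j + 1) = G j j := by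
      intro j
      have h := hstep (j + 1)
      rwa [add_sub_cancel_right] at h
    open Fin.NatCast in
    have hnat : ∀ k : ℕ, G (k : Fin n) (k : Fin n) = G 0 0 := by
      intro k
      induction k with
      | zero => norm_num
      | succ k ih =>
        have hc : ((k + 1 : ℕ) : Fin n) = (k : Fin n) + 1 := by push_cast; ring
        rw [hc, hstep', ih]
    have hall : ∀ i : Fin n, G i i = G 0 0 := by
      intro i
      have h := hnat (i : ℕ)
      rwa [Fin.cast_val_eq_self] at h
    have hGsm : G = (G 0 0) • (1 : Matrix (Fin n) (Fin n) ℂ) := by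
      ext i j
      rw [Matrix.smul_apply, Matrix.one_apply]
      by_cases h : i = j
      · subst h; rw [if_pos rfl, smul_eq_mul, mul_one]; exact hall i
      · rw [if_neg h, smul_eq_mul, mul_zero]; exact hdiag i j h
    refine ⟨G 0 0, ?_, hGsm⟩
    have hdetg' : Matrix.det G = 1 := hdetg
    rw [hGsm, Matrix.det_smul, Fintype.card_fin, Matrix.det_one, mul_one] at hdetg'
    exact hdetg'
end

section
/- Let n ≥ 2 and let ζ ∈ ℂ be a primitive n-th root of unity. If (a,b) and (a',b') are pairs of elements of SU(n) with a b a⁻¹ b⁻¹ = ζ·I and a' b' a'⁻¹ b'⁻¹ = ζ·I, then there exists g ∈ SU(n) with g a g⁻¹ = a' and g b g⁻¹ = b'. -/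
open Matrix

def A0 (n : ℕ) (c : ℂ) : Matrix (Fin n) (Fin n) ℂ :=
  Matrix.of fun k i => if (i : ℕ) + 1 = (k : ℕ) then 1 else
    if (i : ℕ) = n - 1 ∧ (k : ℕ) = 0 then c else 0

lemma unitary_dot {n : ℕ} (a : Matrix (Fin n) (Fin n) ℂ) (ha : star a * a = 1)
    (x y : Fin n → ℂ) : star (a *ᵥ x) ⬝ᵥ (a *ᵥ y) = star x ⬝ᵥ y := by
  rw [star_mulVec, dotProduct_mulVec, vecMul_vecMul, ← star_eq_conjTranspose, ha, vecMul_one]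

lemma lemA {n : ℕ} (hn : 2 ≤ n) (ζ : ℂ) (hζ : IsPrimitiveRoot ζ n)
    (a b : Matrix (Fin n) (Fin n) ℂ)
    (hau : star a * a = 1) (hbu : star b * b = 1)
    (hcomm : a * b = ζ • (b * a))
    (μ : ℂ) (v : Fin n → ℂ) (hv : star v ⬝ᵥ v = 1)
    (hμv : b *ᵥ v = μ • v) :
    ∃ (U : Matrix (Fin n) (Fin n) ℂ) (c : ℂ),
      star U * U = 1 ∧
      a * U = U * A0 n c ∧
      b * U = U * Matrix.diagonal (fun i : Fin n => μ * ζ⁻¹ ^ (i : ℕ)) := by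
  haveI : NeZero n := ⟨by omega⟩
  have hζ0 : ζ ≠ 0 := hζ.ne_zero (by omega)
  have hζinv : IsPrimitiveRoot ζ⁻¹ n := hζ.inv
  have hba : b * a = ζ⁻¹ • (a * b) := by
    rw [hcomm, smul_smul, inv_mul_cancel₀ hζ0, one_smul]
  -- eigenvector chain
  have estep : ∀ k : ℕ, a ^ (k + 1) *ᵥ v = a *ᵥ (a ^ k *ᵥ v) := by
    intro k; rw [mulVec_mulVec, ← pow_succ']
  have heig : ∀ k : ℕ, b *ᵥ (a ^ k *ᵥ v) = (μ * ζ⁻¹ ^ k) • (a ^ k *ᵥ v) := by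
    intro k; induction k with
    | zero => simpa using hμv
    | succ k ih =>
      rw [estep, mulVec_mulVec, hba, smul_mulVec, ← mulVec_mulVec, ih, mulVec_smul,
        smul_smul]
      congr 1
      ring
  have hnorm : ∀ k : ℕ, star (a ^ k *ᵥ v) ⬝ᵥ (a ^ k *ᵥ v) = 1 := by
    intro k; induction k with
    | zero => simpa using hv
    | succ k ih => rw [estep, unitary_dot a hau, ih]
  have hμ0 : μ ≠ 0 := by
    intro h
    have h2 := unitary_dot b hbu v v
    rw [hμv, h, zero_smul] at h2
    simp [hv] at h2
  -- distinctness of eigenvalues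
  have hlam : ∀ i j : Fin n, i ≠ j → μ * ζ⁻¹ ^ (i : ℕ) ≠ μ * ζ⁻¹ ^ (j : ℕ) := by
    intro i j hij h
    have h2 : ζ⁻¹ ^ (i : ℕ) = ζ⁻¹ ^ (j : ℕ) := mul_left_cancel₀ hμ0 h
    exact hij (Fin.ext (hζinv.pow_inj i.isLt j.isLt h2))
  -- orthogonality of distinct eigenvectors
  have hmod : ∀ k : ℕ, (starRingEnd ℂ) (μ * ζ⁻¹ ^ k) * (μ * ζ⁻¹ ^ k) = 1 := by
    intro k
    have h2 := unitary_dot b hbu (a ^ k *ᵥ v) (a ^ k *ᵥ v)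
    rw [heig, star_smul, smul_dotProduct, dotProduct_smul, hnorm] at h2
    simpa [smul_eq_mul, Complex.star_def] using h2
  have horth : ∀ i j : Fin n, i ≠ j →
      star (a ^ (i : ℕ) *ᵥ v) ⬝ᵥ (a ^ (j : ℕ) *ᵥ v) = 0 := by
    intro i j hij
    have key := unitary_dot b hbu (a ^ (i : ℕ) *ᵥ v) (a ^ (j : ℕ) *ᵥ v)
    rw [heig, heig, star_smul, smul_dotProduct, dotProduct_smul] at key
    simp only [smul_eq_mul, Complex.star_def] at key
    by_contra hne
    have h4 : ((starRingEnd ℂ) (μ * ζ⁻¹ ^ (i : ℕ)) * (μ * ζ⁻¹ ^ (j : ℕ)) - 1) *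
        (star (a ^ (i : ℕ) *ᵥ v) ⬝ᵥ (a ^ (j : ℕ) *ᵥ v)) = 0 := by
      linear_combination key
    rcases mul_eq_zero.mp h4 with h5 | h5
    · have h5' : (starRingEnd ℂ) (μ * ζ⁻¹ ^ (i : ℕ)) * (μ * ζ⁻¹ ^ (j : ℕ)) = 1 :=
        sub_eq_zero.mp h5
      have hm := hmod (i : ℕ)
      have h6 : μ * ζ⁻¹ ^ (j : ℕ) = μ * ζ⁻¹ ^ (i : ℕ) := by
        linear_combination (μ * ζ⁻¹ ^ (i : ℕ)) * h5' - (μ * ζ⁻¹ ^ (j : ℕ)) * hm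
      exact hlam j i (Ne.symm hij) h6
    · exact hne h5
  -- the unitary matrix of eigenvectors
  set U : Matrix (Fin n) (Fin n) ℂ :=
    Matrix.of (fun j i : Fin n => (a ^ (i : ℕ) *ᵥ v) j) with hUdef
  have hUU : star U * U = 1 := by
    ext i k
    rw [Matrix.mul_apply, Matrix.one_apply]
    by_cases h : i = k
    · subst h
      simp only [if_pos rfl]
      have := hnorm (i : ℕ)
      simpa [dotProduct, Matrix.star_apply, hUdef] using this
    · simp only [if_neg h]
      have := horth i k h
      simpa [dotProduct, Matrix.star_apply, hUdef] using this
  have hUUt : U * star U = 1 := mul_eq_one_comm.mp hUU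
  set lam : Fin n → ℂ := fun i => μ * ζ⁻¹ ^ (i : ℕ) with hlamdef
  have hbU : b * U = U * Matrix.diagonal lam := by
    ext j i
    have h1 : (b * U) j i = (b *ᵥ (a ^ (i : ℕ) *ᵥ v)) j := by
      simp [Matrix.mul_apply, Matrix.mulVec, dotProduct, hUdef]
    rw [Matrix.mul_diagonal, h1, congrFun (heig (i : ℕ)) j]
    simp [hUdef, hlamdef, Pi.smul_apply, smul_eq_mul, mul_comm]
  -- the vector a^n v
  have hzn : ζ⁻¹ ^ n = 1 := hζinv.pow_eq_one
  have heign : b *ᵥ (a ^ n *ᵥ v) = μ • (a ^ n *ᵥ v) := by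
    have := heig n
    rwa [hzn, mul_one] at this
  set w : Fin n → ℂ := star U *ᵥ (a ^ n *ᵥ v) with hwdef
  have hUw : U *ᵥ w = a ^ n *ᵥ v := by
    rw [hwdef, mulVec_mulVec, hUUt, one_mulVec]
  have hdw : Matrix.diagonal lam *ᵥ w = μ • w := by
    have h1 : U *ᵥ (Matrix.diagonal lam *ᵥ w) = U *ᵥ (μ • w) := by
      rw [mulVec_mulVec, ← hbU, ← mulVec_mulVec, hUw, heign, mulVec_smul, hUw]
    have h2 := congrArg (fun z => star U *ᵥ z) h1
    simpa only [mulVec_mulVec, ← Matrix.mul_assoc, hUU, Matrix.one_mul, one_mulVec] using h2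
  have hwk : ∀ k : Fin n, k ≠ 0 → w k = 0 := by
    intro k hk
    have h1 := congrFun hdw k
    simp only [mulVec_diagonal, Pi.smul_apply, smul_eq_mul] at h1
    have hne : lam k ≠ μ := by
      have := hlam k 0 hk
      simpa [hlamdef] using this
    by_contra hw0
    exact hne (mul_right_cancel₀ hw0 (by rw [h1]))
  set c : ℂ := w 0 with hcdef
  have hanv : a ^ n *ᵥ v = c • v := by
    funext j
    rw [← hUw]
    simp only [Matrix.mulVec, dotProduct]
    rw [Finset.sum_eq_single (0 : Fin n)]
    · simp [hUdef, Pi.smul_apply, smul_eq_mul, hcdef]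
      ring
    · intro k _ hk
      rw [hwk k hk, mul_zero]
    · intro h; exact absurd (Finset.mem_univ _) h
  have haU : a * U = U * A0 n c := by
    ext j i
    have hL : (a * U) j i = (a ^ ((i : ℕ) + 1) *ᵥ v) j := by
      rw [estep]
      simp only [Matrix.mul_apply, hUdef, Matrix.of_apply, Matrix.mulVec, dotProduct]
    rw [hL, Matrix.mul_apply]
    by_cases hi : (i : ℕ) = n - 1
    · have hin : (i : ℕ) + 1 = n := by omega
      rw [Finset.sum_eq_single (0 : Fin n)]
      · have : a ^ ((i : ℕ) + 1) *ᵥ v = c • v := by rw [hin, hanv]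
        rw [this]
        simp [A0, hUdef, hi, Pi.smul_apply, smul_eq_mul]
        ring
      · intro k _ hk
        have h1 : ¬ (n - 1 + 1 = (k : ℕ)) := by
          have := k.isLt; omega
        have h2 : ¬ ((k : ℕ) = 0) := by
          intro h; exact hk (Fin.ext h)
        simp [A0, h1, h2, hi, hk]
      · intro h; exact absurd (Finset.mem_univ _) h
    · have hilt : (i : ℕ) + 1 < n := by have := i.isLt; omega
      rw [Finset.sum_eq_single (⟨(i : ℕ) + 1, hilt⟩ : Fin n)]
      · simp [A0, hUdef]
      · intro k _ hk
        have h1 : ¬ ((i : ℕ) + 1 = (k : ℕ)) := by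
          intro h; exact hk (Fin.ext h.symm)
        simp [A0, h1, hi]
      · intro h; exact absurd (Finset.mem_univ _) h
  exact ⟨U, c, hUU, haU, hbU⟩

lemma detA0 {n : ℕ} (hn : 2 ≤ n) (c : ℂ) : (A0 n c).det = c * (A0 n 1).det := by
  haveI : NeZero n := ⟨by omega⟩
  have hjl : n - 1 < n := by omega
  set jl : Fin n := ⟨n - 1, hjl⟩
  set u : Fin n → ℂ := fun k => if (k : ℕ) = 0 then 1 else 0 with hu
  have h1 : A0 n c = (A0 n 1).updateCol jl (c • u) := by
    ext k i
    rw [Matrix.updateCol_apply]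
    by_cases hi : i = jl
    · subst hi
      have : ¬ ((jl : ℕ) + 1 = (k : ℕ)) := by
        simp only [jl]; omega
      simp [A0, this, u, jl, Pi.smul_apply, smul_eq_mul]
    · have : (i : ℕ) ≠ n - 1 := by
        intro h; exact hi (Fin.ext h)
      simp [A0, hi, this]
  have h2 : (A0 n 1).updateCol jl u = A0 n 1 := by
    ext k i
    rw [Matrix.updateCol_apply]
    by_cases hi : i = jl
    · subst hi
      have : ¬ ((jl : ℕ) + 1 = (k : ℕ)) := by simp only [jl]; omega
      simp [A0, this, u, jl]
    · simp [hi]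
  rw [h1, Matrix.det_updateCol_smul, h2]

-- helper: normalized eigenvector exists
lemma exists_unit_eigenvector {n : ℕ} [NeZero n] (b : Matrix (Fin n) (Fin n) ℂ) :
    ∃ (μ : ℂ) (v : Fin n → ℂ), star v ⬝ᵥ v = 1 ∧ b *ᵥ v = μ • v := by
  haveI : Nontrivial (Fin n → ℂ) := by
    refine ⟨fun _ => 0, fun _ => 1, fun h => ?_⟩
    have := congrFun h 0
    simp at this
  obtain ⟨μ, hμ⟩ := Module.End.exists_eigenvalue (Matrix.mulVecLin b)
  obtain ⟨v₀, hv₀⟩ := hμ.exists_hasEigenvector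
  have heig : b *ᵥ v₀ = μ • v₀ := by
    have := Module.End.mem_eigenspace_iff.mp hv₀.1
    simpa [Matrix.mulVecLin_apply] using this
  have hv₀0 : v₀ ≠ 0 := hv₀.2
  set s : ℝ := ∑ i, Complex.normSq (v₀ i) with hs
  have hspos : 0 < s := by
    obtain ⟨i, hi⟩ := Function.ne_iff.mp hv₀0
    refine Finset.sum_pos' (fun j _ => Complex.normSq_nonneg _) ⟨i, Finset.mem_univ i, ?_⟩
    exact Complex.normSq_pos.mpr hi
  have hdot : star v₀ ⬝ᵥ v₀ = (s : ℂ) := by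
    simp only [dotProduct, Pi.star_apply, hs]
    push_cast
    refine Finset.sum_congr rfl fun i _ => ?_
    rw [Complex.star_def, mul_comm, Complex.mul_conj]
  set t : ℝ := (Real.sqrt s)⁻¹ with ht
  refine ⟨μ, (t : ℂ) • v₀, ?_, ?_⟩
  · rw [star_smul, smul_dotProduct, dotProduct_smul, hdot]
    simp only [smul_eq_mul, Complex.star_def, Complex.conj_ofReal]
    have : (t : ℂ) * ((t : ℂ) * (s : ℂ)) = ((t * (t * s) : ℝ) : ℂ) := by push_cast; ring
    rw [this, ht]
    rw [show (Real.sqrt s)⁻¹ * ((Real.sqrt s)⁻¹ * s) = s / (Real.sqrt s * Real.sqrt s) by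
      field_simp]
    rw [Real.mul_self_sqrt hspos.le, div_self hspos.ne']
    norm_num
  · rw [mulVec_smul, heig, smul_comm]

section Aux

lemma conj_transfer {n : ℕ} {M M' U U' C : Matrix (Fin n) (Fin n) ℂ}
    (hU : star U * U = 1) (hU' : star U' * U' = 1)
    (h1 : M * U = U * C) (h2 : M' * U' = U' * C) :
    (U' * star U) * M = M' * (U' * star U) := by
  have hUt : U * star U = 1 := mul_eq_one_comm.mp hU
  have h3 : star U * M = C * star U := by
    have h4 := congrArg (fun X => star U * X * star U) h1
    simp only [← Matrix.mul_assoc] at h4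
    rw [Matrix.mul_assoc (star U * M) U (star U), hUt, Matrix.mul_one, hU, Matrix.one_mul] at h4
    exact h4
  calc U' * star U * M = U' * (star U * M) := by rw [Matrix.mul_assoc]
    _ = U' * (C * star U) := by rw [h3]
    _ = (U' * C) * star U := by rw [Matrix.mul_assoc]
    _ = (M' * U') * star U := by rw [h2]
    _ = M' * (U' * star U) := by rw [Matrix.mul_assoc]

lemma det_eq_of_conj {n : ℕ} (U M D : Matrix (Fin n) (Fin n) ℂ)
    (hU : star U * U = 1) (h : M * U = U * D) : M.det = D.det := by
  have hdU : det (star U) * det U = 1 := by rw [← det_mul, hU, det_one]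
  have hdU0 : det U ≠ 0 := fun h0 => by simp [h0] at hdU
  have h2 := congrArg det h
  rw [det_mul, det_mul] at h2
  have h3 : det M * det U = det D * det U := by rw [h2]; ring
  exact mul_right_cancel₀ hdU0 h3

end Aux

set_option maxHeartbeats 1000000 in
/-- For `n ≥ 2` and `ζ` a primitive `n`-th root of unity, any two pairs in `SU(n)`
(elements of the unitary group of determinant `1`) with commutator `ζ·I` are
conjugate by an element of `SU(n)`. -/
theorem pairs_with_commutator_primitive_root_conjugate_SU
    (n : ℕ) (hn : 2 ≤ n) (ζ : ℂ) (hζ : IsPrimitiveRoot ζ n)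
    (a b a' b' : Matrix.unitaryGroup (Fin n) ℂ)
    (ha : Matrix.det (a : Matrix (Fin n) (Fin n) ℂ) = 1)
    (hb : Matrix.det (b : Matrix (Fin n) (Fin n) ℂ) = 1)
    (ha' : Matrix.det (a' : Matrix (Fin n) (Fin n) ℂ) = 1)
    (hb' : Matrix.det (b' : Matrix (Fin n) (Fin n) ℂ) = 1)
    (hab : ((a * b * a⁻¹ * b⁻¹ : Matrix.unitaryGroup (Fin n) ℂ) : Matrix (Fin n) (Fin n) ℂ)
        = ζ • (1 : Matrix (Fin n) (Fin n) ℂ))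
    (hab' : ((a' * b' * a'⁻¹ * b'⁻¹ : Matrix.unitaryGroup (Fin n) ℂ) : Matrix (Fin n) (Fin n) ℂ)
        = ζ • (1 : Matrix (Fin n) (Fin n) ℂ)) :
    ∃ g : Matrix.unitaryGroup (Fin n) ℂ,
      Matrix.det (g : Matrix (Fin n) (Fin n) ℂ) = 1 ∧
      g * a * g⁻¹ = a' ∧ g * b * g⁻¹ = b' := by
  haveI : NeZero n := ⟨by omega⟩
  have hζ0 : ζ ≠ 0 := hζ.ne_zero (by omega)
  have hauni : star (a : Matrix (Fin n) (Fin n) ℂ) * a = 1 := Matrix.mem_unitaryGroup_iff'.mp a.2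
  have hbuni : star (b : Matrix (Fin n) (Fin n) ℂ) * b = 1 := Matrix.mem_unitaryGroup_iff'.mp b.2
  have ha'uni : star (a' : Matrix (Fin n) (Fin n) ℂ) * a' = 1 :=
    Matrix.mem_unitaryGroup_iff'.mp a'.2
  have hb'uni : star (b' : Matrix (Fin n) (Fin n) ℂ) * b' = 1 :=
    Matrix.mem_unitaryGroup_iff'.mp b'.2
  -- commutation relations as matrices
  have hcm : ∀ x y : Matrix.unitaryGroup (Fin n) ℂ,
      ((x * y * x⁻¹ * y⁻¹ : Matrix.unitaryGroup (Fin n) ℂ) : Matrix (Fin n) (Fin n) ℂ)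
        = ζ • (1 : Matrix (Fin n) (Fin n) ℂ) →
      (x : Matrix (Fin n) (Fin n) ℂ) * y = ζ • ((y : Matrix (Fin n) (Fin n) ℂ) * x) := by
    intro x y h
    have h2 : (x * y : Matrix.unitaryGroup (Fin n) ℂ) = (x * y * x⁻¹ * y⁻¹) * (y * x) := by
      group
    have h3 : ((x * y : Matrix.unitaryGroup (Fin n) ℂ) : Matrix (Fin n) (Fin n) ℂ)
        = ((x * y * x⁻¹ * y⁻¹ : Matrix.unitaryGroup (Fin n) ℂ) : Matrix (Fin n) (Fin n) ℂ)
          * ((y * x : Matrix.unitaryGroup (Fin n) ℂ) : Matrix (Fin n) (Fin n) ℂ) := by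
      conv_lhs => rw [h2]
      rfl
    rw [h, MulMemClass.coe_mul, MulMemClass.coe_mul] at h3
    rw [h3, Matrix.smul_mul, Matrix.one_mul]
  have hcab := hcm a b hab
  have hcab' := hcm a' b' hab'
  -- eigenvectors
  obtain ⟨μ₁, v₁, hv₁, hev₁⟩ := exists_unit_eigenvector (b : Matrix (Fin n) (Fin n) ℂ)
  obtain ⟨μ₂, v₂, hv₂, hev₂⟩ := exists_unit_eigenvector (b' : Matrix (Fin n) (Fin n) ℂ)
  obtain ⟨U₁, c₁, hU₁, haU₁, hbU₁⟩ := lemA hn ζ hζ _ _ hauni hbuni hcab μ₁ v₁ hv₁ hev₁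
  obtain ⟨U₂, c₂, hU₂, haU₂, hbU₂⟩ := lemA hn ζ hζ _ _ ha'uni hb'uni hcab' μ₂ v₂ hv₂ hev₂
  -- the two eigenvalue parameters have equal n-th powers
  have hprod : ∀ μ : ℂ, Matrix.det (Matrix.diagonal fun i : Fin n => μ * ζ⁻¹ ^ (i : ℕ))
      = μ ^ n * ∏ i : Fin n, ζ⁻¹ ^ (i : ℕ) := by
    intro μ
    rw [Matrix.det_diagonal, Finset.prod_mul_distrib, Finset.prod_const, Finset.card_univ,
      Fintype.card_fin]
  have hd1 : μ₁ ^ n * ∏ i : Fin n, ζ⁻¹ ^ (i : ℕ) = 1 := by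
    rw [← hprod, ← det_eq_of_conj U₁ _ _ hU₁ hbU₁]; exact hb
  have hd2 : μ₂ ^ n * ∏ i : Fin n, ζ⁻¹ ^ (i : ℕ) = 1 := by
    rw [← hprod, ← det_eq_of_conj U₂ _ _ hU₂ hbU₂]; exact hb'
  have hP0 : (∏ i : Fin n, ζ⁻¹ ^ (i : ℕ)) ≠ 0 :=
    Finset.prod_ne_zero_iff.mpr fun i _ => pow_ne_zero _ (inv_ne_zero hζ0)
  have hμn : μ₂ ^ n = μ₁ ^ n := mul_right_cancel₀ hP0 (hd2.trans hd1.symm)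
  have hμ₁0 : μ₁ ≠ 0 := by
    intro h
    rw [h, zero_pow (by omega : n ≠ 0), zero_mul] at hd1
    exact one_ne_zero hd1.symm
  have hω : (μ₂ * μ₁⁻¹) ^ n = 1 := by
    rw [mul_pow, inv_pow, hμn, mul_inv_cancel₀ (pow_ne_zero _ hμ₁0)]
  obtain ⟨k, hkn, hζk⟩ := hζ.eq_pow_of_pow_eq_one hω
  have hμ₂eq : μ₂ = μ₁ * ζ ^ k := by
    rw [hζk]
    field_simp
  -- find an eigenvector of b with eigenvalue μ₂
  have hjvlt : (if k = 0 then 0 else n - k) < n := by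
    by_cases hk0 : k = 0 <;> simp [hk0] <;> omega
  set j : Fin n := ⟨if k = 0 then 0 else n - k, hjvlt⟩ with hjdef
  have hlamj : μ₁ * ζ⁻¹ ^ (j : ℕ) = μ₂ := by
    rw [hμ₂eq]
    by_cases hk0 : k = 0
    · simp [hjdef, hk0]
    · have hnk : n - k + k = n := by omega
      have h1 : ζ ^ (n - k) * ζ ^ k = 1 := by rw [← pow_add, hnk]; exact hζ.pow_eq_one
      have h2 : ζ⁻¹ ^ (n - k) = ζ ^ k := by rw [inv_pow]; exact inv_eq_of_mul_eq_one_right h1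
      simp only [hjdef, hk0, if_false]
      rw [h2]
  set v₃ : Fin n → ℂ := fun r => U₁ r j with hv₃def
  have hv₃ : star v₃ ⬝ᵥ v₃ = 1 := by
    have h1 := congrFun (congrFun hU₁ j) j
    simpa [Matrix.mul_apply, Matrix.one_apply, dotProduct, Matrix.star_apply,
      hv₃def] using h1
  have hev₃ : (b : Matrix (Fin n) (Fin n) ℂ) *ᵥ v₃ = μ₂ • v₃ := by
    funext r
    have h1 := congrFun (congrFun hbU₁ r) j
    rw [Matrix.mul_diagonal] at h1
    simp only [Matrix.mul_apply] at h1
    simp only [Matrix.mulVec, dotProduct, hv₃def, Pi.smul_apply, smul_eq_mul]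
    rw [h1, hlamj, mul_comm]
  obtain ⟨U₃, c₃, hU₃, haU₃, hbU₃⟩ := lemA hn ζ hζ _ _ hauni hbuni hcab μ₂ v₃ hv₃ hev₃
  -- the corner entries agree
  have hdetA₃ : Matrix.det (A0 n c₃) = 1 := by
    rw [← det_eq_of_conj U₃ _ _ hU₃ haU₃]; exact ha
  have hdetA₂ : Matrix.det (A0 n c₂) = 1 := by
    rw [← det_eq_of_conj U₂ _ _ hU₂ haU₂]; exact ha'
  have hc : c₃ = c₂ := by
    rw [detA0 hn] at hdetA₃ hdetA₂
    have hK0 : Matrix.det (A0 n 1) ≠ 0 := by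
      intro h
      rw [h, mul_zero] at hdetA₃
      exact one_ne_zero hdetA₃.symm
    exact mul_right_cancel₀ hK0 (hdetA₃.trans hdetA₂.symm)
  rw [hc] at haU₃
  -- the conjugating matrix
  set g₀ : Matrix (Fin n) (Fin n) ℂ := U₂ * star U₃ with hg₀def
  have hg₀ : star g₀ * g₀ = 1 := by
    have hU₃t : U₃ * star U₃ = 1 := mul_eq_one_comm.mp hU₃
    rw [hg₀def, Matrix.star_mul, star_star]
    calc U₃ * star U₂ * (U₂ * star U₃) = U₃ * (star U₂ * U₂) * star U₃ := by
          noncomm_ring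
      _ = 1 := by rw [hU₂, Matrix.mul_one, hU₃t]
  have hag₀ : g₀ * (a : Matrix (Fin n) (Fin n) ℂ) = (a' : Matrix (Fin n) (Fin n) ℂ) * g₀ :=
    conj_transfer hU₃ hU₂ haU₃ haU₂
  have hbg₀ : g₀ * (b : Matrix (Fin n) (Fin n) ℂ) = (b' : Matrix (Fin n) (Fin n) ℂ) * g₀ :=
    conj_transfer hU₃ hU₂ hbU₃ hbU₂
  -- normalize the determinant
  have hdg : star (Matrix.det g₀) * Matrix.det g₀ = 1 := by
    have h1 := congrArg Matrix.det hg₀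
    rwa [Matrix.det_mul, Matrix.det_one, Matrix.star_eq_conjTranspose,
      Matrix.det_conjTranspose] at h1
  have hdg0 : Matrix.det g₀ ≠ 0 := fun h => by simp [h] at hdg
  obtain ⟨ρ, hρ⟩ := IsAlgClosed.exists_pow_nat_eq (k := ℂ) (Matrix.det g₀)⁻¹ (by omega : 0 < n)
  have hρρ : star ρ * ρ = 1 := by
    have h1 : (star ρ * ρ) ^ n = 1 := by
      rw [mul_pow, ← star_pow, hρ, star_inv₀, ← mul_inv, hdg, inv_one]
    have h2 : ((Complex.normSq ρ : ℝ) : ℂ) = star ρ * ρ := by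
      rw [Complex.star_def]; exact Complex.normSq_eq_conj_mul_self
    have h3 : (Complex.normSq ρ) ^ n = 1 := by
      rw [← h2] at h1
      exact_mod_cast h1
    have h4 : Complex.normSq ρ = 1 := by
      rcases lt_trichotomy (Complex.normSq ρ) 1 with h | h | h
      · exfalso
        have h5 := pow_lt_one₀ (Complex.normSq_nonneg ρ) h (by omega : n ≠ 0)
        rw [h3] at h5; exact lt_irrefl _ h5
      · exact h
      · exfalso
        have h5 := one_lt_pow₀ h (by omega : n ≠ 0)
        rw [h3] at h5; exact lt_irrefl _ h5
    rw [← h2, h4]; norm_num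
  have hgmem : (ρ • g₀) ∈ Matrix.unitaryGroup (Fin n) ℂ := by
    rw [Matrix.mem_unitaryGroup_iff']
    rw [star_smul, Matrix.smul_mul, Matrix.mul_smul, smul_smul, hg₀, hρρ, one_smul]
  refine ⟨⟨ρ • g₀, hgmem⟩, ?_, ?_, ?_⟩
  · show Matrix.det (ρ • g₀) = 1
    rw [Matrix.det_smul, Fintype.card_fin, hρ, inv_mul_cancel₀ hdg0]
  · apply mul_inv_eq_iff_eq_mul.mpr
    apply Subtype.ext
    simp only [MulMemClass.coe_mul]
    show (ρ • g₀) * (a : Matrix (Fin n) (Fin n) ℂ) = (a' : Matrix (Fin n) (Fin n) ℂ) * (ρ • g₀)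
    rw [Matrix.smul_mul, hag₀, Matrix.mul_smul]
  · apply mul_inv_eq_iff_eq_mul.mpr
    apply Subtype.ext
    simp only [MulMemClass.coe_mul]
    show (ρ • g₀) * (b : Matrix (Fin n) (Fin n) ℂ) = (b' : Matrix (Fin n) (Fin n) ℂ) * (ρ • g₀)
    rw [Matrix.smul_mul, hbg₀, Matrix.mul_smul]
end

section
/- Let n ≥ 2, let a, b ∈ SU(n) and ζ ∈ ℂ with a b a⁻¹ b⁻¹ = ζ·I. If the centralizer of {a,b} in SU(n) equals the center of SU(n) (i.e. every element of SU(n) commuting with a and b is a scalar matrix ω·I with ωⁿ = 1), then ζ is a primitive n-th root of unity. -/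
open Matrix

set_option maxHeartbeats 1000000

private lemma aux_proj_comm {n : ℕ} (W : Submodule ℂ (EuclideanSpace ℂ (Fin n)))
    (f : EuclideanSpace ℂ (Fin n) →ₗ[ℂ] EuclideanSpace ℂ (Fin n))
    (hf : LinearMap.adjoint f ∘ₗ f = LinearMap.id)
    (hW : ∀ x ∈ W, f x ∈ W) (x : EuclideanSpace ℂ (Fin n)) :
    (W.subtype ∘ₗ (W.orthogonalProjectionOnto : _ →L[ℂ] W).toLinearMap) (f x)
      = f ((W.subtype ∘ₗ (W.orthogonalProjectionOnto : _ →L[ℂ] W).toLinearMap) x) := by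
  classical
  have hinner : ∀ u v : EuclideanSpace ℂ (Fin n), inner ℂ (f u) (f v) = (inner ℂ u v : ℂ) := by
    intro u v
    have : inner ℂ u ((LinearMap.adjoint f ∘ₗ f) v) = (inner ℂ u v : ℂ) := by rw [hf]; rfl
    rw [LinearMap.comp_apply, LinearMap.adjoint_inner_right] at this
    exact this
  have hinj : Function.Injective f := by
    intro u v huv
    have : (LinearMap.adjoint f ∘ₗ f) u = (LinearMap.adjoint f ∘ₗ f) v := by
      simp [LinearMap.comp_apply, huv]
    simpa [hf] using this
  -- f maps W onto W
  have hmap : Submodule.map f W = W := by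
    refine Submodule.eq_of_le_of_finrank_le ?_ ?_
    · rintro _ ⟨y, hy, rfl⟩; exact hW y hy
    · exact le_of_eq (LinearEquiv.finrank_eq (W.equivMapOfInjective f hinj))
  -- f maps Wᗮ into Wᗮ
  have hWperp : ∀ y ∈ Wᗮ, f y ∈ Wᗮ := by
    intro y hy
    rw [Submodule.mem_orthogonal]
    intro u hu
    obtain ⟨w, hw, rfl⟩ : ∃ w ∈ W, f w = u := by
      have : u ∈ Submodule.map f W := hmap.symm ▸ hu
      simpa using this
    rw [hinner]
    exact (Submodule.mem_orthogonal W y).mp hy w hw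
  set p : EuclideanSpace ℂ (Fin n) →ₗ[ℂ] EuclideanSpace ℂ (Fin n) :=
    W.subtype ∘ₗ (W.orthogonalProjectionOnto : _ →L[ℂ] W).toLinearMap with hp
  have hpW : ∀ u ∈ W, p u = u := by
    intro u hu; simp [hp, (Submodule.starProjection_apply W u).symm.trans (W.starProjection_eq_self_iff.mpr hu)]
  have hpWperp : ∀ u ∈ Wᗮ, p u = 0 := by
    intro u hu; simp [hp, Submodule.orthogonalProjectionOnto_apply_of_mem_orthogonal hu]
  have hdecomp : x = p x + (x - p x) := by abel
  have hx1 : p x ∈ W := by simp [hp]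
  have hx2 : x - p x ∈ Wᗮ := W.sub_starProjection_mem_orthogonal x
  calc p (f x) = p (f (p x + (x - p x))) := by rw [← hdecomp]
    _ = p (f (p x)) + p (f (x - p x)) := by rw [map_add, map_add]
    _ = f (p x) + 0 := by rw [hpW _ (hW _ hx1), hpWperp _ (hWperp _ hx2)]
    _ = f (p x) := by rw [add_zero]

/-- Let `n ≥ 2` and `a, b ∈ SU(n)` (unitary with determinant `1`) with
`a b a⁻¹ b⁻¹ = ζ·I`. If the centralizer of `{a,b}` in `SU(n)` equals the center of
`SU(n)`, then `ζ` is a primitive `n`-th root of unity. -/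
theorem irreducible_pair_commutator_primitive_SU
    (n : ℕ) (hn : 2 ≤ n) (ζ : ℂ)
    (a b : Matrix.unitaryGroup (Fin n) ℂ)
    (ha : Matrix.det (a : Matrix (Fin n) (Fin n) ℂ) = 1)
    (hb : Matrix.det (b : Matrix (Fin n) (Fin n) ℂ) = 1)
    (hab : ((a * b * a⁻¹ * b⁻¹ : Matrix.unitaryGroup (Fin n) ℂ) : Matrix (Fin n) (Fin n) ℂ)
        = ζ • (1 : Matrix (Fin n) (Fin n) ℂ))
    (hirr : ∀ g : Matrix.unitaryGroup (Fin n) ℂ,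
        Matrix.det (g : Matrix (Fin n) (Fin n) ℂ) = 1 →
        g * a = a * g → g * b = b * g →
        ∃ ω : ℂ, ω ^ n = 1 ∧
          (g : Matrix (Fin n) (Fin n) ℂ) = ω • (1 : Matrix (Fin n) (Fin n) ℂ)) :
    IsPrimitiveRoot ζ n := by
  classical
  have hn0 : 0 < n := by omega
  set A : Matrix (Fin n) (Fin n) ℂ := (a : Matrix (Fin n) (Fin n) ℂ) with hA
  set B : Matrix (Fin n) (Fin n) ℂ := (b : Matrix (Fin n) (Fin n) ℂ) with hB
  have hAu : star A * A = 1 := a.prop.1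
  have hAu' : A * star A = 1 := a.prop.2
  have hBu : star B * B = 1 := b.prop.1
  have hBu' : B * star B = 1 := b.prop.2
  have h1 : A * B * star A * star B = ζ • 1 := by
    have : ((a * b * a⁻¹ * b⁻¹ : Matrix.unitaryGroup (Fin n) ℂ) : Matrix (Fin n) (Fin n) ℂ)
        = A * B * star A * star B := by
      simp [hA, hB]
    rw [← this]; exact hab
  -- commutation relation
  have hcomm : A * B = ζ • (B * A) := by
    have h2 := congrArg (fun M => M * (B * A)) h1
    simp only [smul_mul_assoc, one_mul] at h2
    calc A * B = A * B * star A * star B * (B * A) := by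
          rw [mul_assoc (A * B * star A) (star B) (B * A), ← mul_assoc (star B) B A, hBu,
            one_mul, mul_assoc (A * B) (star A) A, hAu, mul_one]
      _ = ζ • (B * A) := h2
  -- ζ ^ n = 1
  have hζn : ζ ^ n = 1 := by
    have hdet := congrArg Matrix.det h1
    rw [Matrix.det_mul, Matrix.det_mul, Matrix.det_mul, Matrix.smul_eq_diagonal_mul] at hdet
    rw [Matrix.star_eq_conjTranspose, Matrix.star_eq_conjTranspose, Matrix.det_conjTranspose,
      Matrix.det_conjTranspose, ha, hb] at hdet
    simpa [Matrix.det_diagonal, Finset.prod_const] using hdet.symm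
  have hζ0 : ζ ≠ 0 := by
    intro h; rw [h] at hζn; simp [zero_pow hn0.ne'] at hζn
  refine ⟨hζn, ?_⟩
  intro l hl
  have hfin : IsOfFinOrder ζ := isOfFinOrder_iff_pow_eq_one.mpr ⟨n, hn0, hζn⟩
  set d : ℕ := orderOf ζ with hd
  have hdn : d ∣ n := orderOf_dvd_of_pow_eq_one hζn
  have hdl : d ∣ l := orderOf_dvd_of_pow_eq_one hl
  have hd0 : 0 < d := hfin.orderOf_pos
  have hζd : ζ ^ d = 1 := pow_orderOf_eq_one ζ
  suffices hnd : n ≤ d by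
    have : d = n := le_antisymm (Nat.le_of_dvd hn0 hdn) hnd
    rwa [← this]
  by_contra hlt
  have hdltn : d < n := lt_of_le_of_ne (Nat.le_of_dvd hn0 hdn) (fun h => hlt (le_of_eq h.symm))
  -- B^k * A = (ζ⁻¹)^k • (A * B^k)
  have hBA : B * A = ζ⁻¹ • (A * B) := by
    rw [hcomm, smul_smul, inv_mul_cancel₀ hζ0, one_smul]
  have hBk : ∀ k : ℕ, B ^ k * A = (ζ⁻¹) ^ k • (A * B ^ k) := by
    intro k
    induction k with
    | zero => simp
    | succ k ih =>
      rw [pow_succ, mul_assoc, hBA, Matrix.mul_smul, ← mul_assoc, ih, Matrix.smul_mul,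
        smul_smul, pow_succ, mul_assoc]
      rw [mul_comm (ζ⁻¹ ^ k) ζ⁻¹]
  have hABk : ∀ k : ℕ, A * B ^ k = ζ ^ k • (B ^ k * A) := by
    intro k
    rw [hBk, smul_smul, ← mul_pow, mul_inv_cancel₀ hζ0, one_pow, one_smul]
  -- b ^ d is a scalar
  have hBdA : B ^ d * A = A * B ^ d := by
    rw [hBk d, inv_pow, hζd, inv_one, one_smul]
  obtain ⟨ω', hω'n, hBd⟩ : ∃ ω' : ℂ, ω' ^ n = 1 ∧ B ^ d = ω' • 1 := by
    have hcoe : ((b ^ d : Matrix.unitaryGroup (Fin n) ℂ) : Matrix (Fin n) (Fin n) ℂ) = B ^ d := by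
      simp [hB]
    have hdet : Matrix.det ((b ^ d : Matrix.unitaryGroup (Fin n) ℂ) : Matrix (Fin n) (Fin n) ℂ)
        = 1 := by rw [hcoe, Matrix.det_pow, hb, one_pow]
    have hca : (b ^ d) * a = a * (b ^ d) := Subtype.ext (by
      push_cast [hcoe]
      exact hBdA)
    have hcb : (b ^ d) * b = b * (b ^ d) := ((Commute.refl b).pow_left d).eq
    obtain ⟨ω', h1', h2'⟩ := hirr (b ^ d) hdet hca hcb
    exact ⟨ω', h1', by rwa [hcoe] at h2'⟩
  -- move to EuclideanSpace
  have tEmul : ∀ M N : Matrix (Fin n) (Fin n) ℂ,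
      Matrix.toEuclideanLin (M * N) = (Matrix.toEuclideanLin M) ∘ₗ (Matrix.toEuclideanLin N) := by
    intro M N
    ext x
    simp [Matrix.toEuclideanLin_apply, Matrix.mulVec_mulVec]
  have tEone : Matrix.toEuclideanLin (1 : Matrix (Fin n) (Fin n) ℂ) = LinearMap.id := by
    ext x
    simp [Matrix.toEuclideanLin_apply]
  set f : EuclideanSpace ℂ (Fin n) →ₗ[ℂ] EuclideanSpace ℂ (Fin n) := Matrix.toEuclideanLin A
    with hf
  haveI : Nontrivial (EuclideanSpace ℂ (Fin n)) :=
    Module.nontrivial_of_finrank_pos (R := ℂ)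
      (by rw [finrank_euclideanSpace_fin]; omega)
  obtain ⟨μ, hμ⟩ := Module.End.exists_eigenvalue (f : Module.End ℂ (EuclideanSpace ℂ (Fin n)))
  obtain ⟨v, hv⟩ := hμ.exists_hasEigenvector
  have hv0 : v ≠ 0 := hv.2
  have hfv : f v = μ • v := hv.apply_eq_smul
  -- the vectors b^i v
  set vecs : ℕ → EuclideanSpace ℂ (Fin n) := fun i => Matrix.toEuclideanLin (B ^ i) v with hvecs
  have hvecs0 : vecs 0 = v := by simp [hvecs, tEone]
  have hvecsd : vecs d = ω' • v := by
    rw [hvecs]; simp only; rw [hBd, LinearEquiv.map_smul, tEone]; rfl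
  have hfvecs : ∀ i : ℕ, f (vecs i) = (ζ ^ i * μ) • vecs i := by
    intro i
    have : f (vecs i) = Matrix.toEuclideanLin (A * B ^ i) v := by
      rw [tEmul]; rfl
    rw [this, hABk i, _root_.map_smul, LinearMap.smul_apply, tEmul]
    simp only [LinearMap.comp_apply]
    rw [← hf, hfv, LinearMap.map_smul, smul_smul]
  have hgvecs : ∀ i : ℕ, Matrix.toEuclideanLin B (vecs i) = vecs (i + 1) := by
    intro i
    rw [hvecs]
    simp only
    rw [← LinearMap.comp_apply, ← tEmul, ← pow_succ']
  -- the invariant subspace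
  set W : Submodule ℂ (EuclideanSpace ℂ (Fin n)) :=
    Submodule.span ℂ (Set.range fun i : Fin d => vecs i) with hW
  have hvW : v ∈ W := by
    rw [← hvecs0]
    exact Submodule.subset_span ⟨⟨0, hd0⟩, rfl⟩
  have hWf : ∀ x ∈ W, f x ∈ W := by
    have : Submodule.map f W ≤ W := by
      rw [hW, Submodule.map_span, Submodule.span_le]
      rintro _ ⟨_, ⟨i, rfl⟩, rfl⟩
      rw [hfvecs]
      exact Submodule.smul_mem _ _ (Submodule.subset_span ⟨i, rfl⟩)
    intro x hx
    exact this ⟨x, hx, rfl⟩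
  have hWg : ∀ x ∈ W, Matrix.toEuclideanLin B x ∈ W := by
    have : Submodule.map (Matrix.toEuclideanLin B) W ≤ W := by
      rw [hW, Submodule.map_span, Submodule.span_le]
      rintro _ ⟨_, ⟨i, rfl⟩, rfl⟩
      rw [hgvecs]
      rcases lt_or_ge ((i : ℕ) + 1) d with hi | hi
      · exact Submodule.subset_span ⟨⟨(i : ℕ) + 1, hi⟩, rfl⟩
      · have : (i : ℕ) + 1 = d := le_antisymm i.2 hi
        rw [this, hvecsd]
        exact Submodule.smul_mem _ _ hvW
    intro x hx
    exact this ⟨x, hx, rfl⟩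
  -- W is a proper subspace
  have hWtop : W ≠ ⊤ := by
    have : W < ⊤ := by
      rw [hW]
      apply span_lt_top_of_card_lt_finrank
      rw [finrank_euclideanSpace_fin]
      calc (Set.range fun i : Fin d => vecs i).toFinset.card
          ≤ Fintype.card (Fin d) := by
            rw [Set.toFinset_range]
            exact (Finset.card_image_le).trans (by simp)
        _ = d := Fintype.card_fin d
        _ < n := hdltn
    exact this.ne
  -- the orthogonal projection onto W, as a matrix
  set p : EuclideanSpace ℂ (Fin n) →ₗ[ℂ] EuclideanSpace ℂ (Fin n) :=
    W.subtype ∘ₗ (W.orthogonalProjectionOnto : _ →L[ℂ] W).toLinearMap with hp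
  set P : Matrix (Fin n) (Fin n) ℂ := Matrix.toEuclideanLin.symm p with hP
  have hPp : Matrix.toEuclideanLin P = p := by
    rw [hP]; exact Matrix.toEuclideanLin.apply_symm_apply p
  have hpself : ∀ x ∈ W, p x = x := fun x hx => by
    simp [hp, (Submodule.starProjection_apply W x).symm.trans (W.starProjection_eq_self_iff.mpr hx)]
  have hpperp : ∀ x ∈ Wᗮ, p x = 0 := fun x hx => by
    simp [hp, Submodule.orthogonalProjectionOnto_apply_of_mem_orthogonal hx]
  have hPP : P * P = P := by
    apply Matrix.toEuclideanLin.injective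
    rw [tEmul, hPp]
    refine LinearMap.ext fun x => ?_
    exact hpself (p x) (show p x ∈ W from Submodule.coe_mem _)
  have hadj : LinearMap.adjoint p = p := by
    symm
    rw [LinearMap.eq_adjoint_iff]
    intro x y
    exact W.inner_starProjection_left_eq_right x y
  have hPH : star P = P := by
    apply Matrix.toEuclideanLin.injective
    rw [Matrix.star_eq_conjTranspose, Matrix.toEuclideanLin_conjTranspose_eq_adjoint, hPp, hadj]
  have hfadj : LinearMap.adjoint f ∘ₗ f = LinearMap.id := by
    rw [hf, ← Matrix.toEuclideanLin_conjTranspose_eq_adjoint, ← tEmul,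
      ← Matrix.star_eq_conjTranspose, hAu, tEone]
  have hgadj : LinearMap.adjoint (Matrix.toEuclideanLin B) ∘ₗ Matrix.toEuclideanLin B
      = LinearMap.id := by
    rw [← Matrix.toEuclideanLin_conjTranspose_eq_adjoint, ← tEmul,
      ← Matrix.star_eq_conjTranspose, hBu, tEone]
  have hPA : P * A = A * P := by
    apply Matrix.toEuclideanLin.injective
    rw [tEmul, tEmul, hPp, ← hf]
    exact LinearMap.ext fun x => aux_proj_comm W f hfadj hWf x
  have hPB : P * B = B * P := by
    apply Matrix.toEuclideanLin.injective
    rw [tEmul, tEmul, hPp]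
    exact LinearMap.ext fun x => aux_proj_comm W _ hgadj hWg x
  -- the reflection 1 - 2P
  set Q : Matrix (Fin n) (Fin n) ℂ := 1 - (2:ℂ) • P with hQ
  have hQQ : Q * Q = 1 := by
    rw [hQ]
    simp only [Matrix.sub_mul, Matrix.mul_sub, Matrix.smul_mul, Matrix.mul_smul, one_mul,
      mul_one, smul_smul, hPP]
    module
  have hQH : star Q = Q := by
    rw [hQ, star_sub, star_one, star_smul, hPH]
    norm_num
  set c : ℂ := Q.det with hc
  have hcc : c * c = 1 := by rw [hc, ← Matrix.det_mul, hQQ, Matrix.det_one]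
  obtain ⟨γ, hγc⟩ := IsAlgClosed.exists_pow_nat_eq c hn0
  have habs : ‖γ‖ = 1 := by
    have hc1 : ‖c‖ = 1 := by
      rcases mul_self_eq_one_iff.mp hcc with h | h <;> simp [h]
    have hpow : (‖γ‖) ^ n = 1 := by rw [← norm_pow, hγc, hc1]
    have h0 := norm_nonneg γ
    rcases lt_trichotomy (‖γ‖) 1 with h | h | h
    · have := pow_lt_one₀ h0 h hn0.ne'
      rw [hpow] at this; exact absurd this (lt_irrefl 1)
    · exact h
    · have := one_lt_pow₀ h hn0.ne'
      rw [hpow] at this; exact absurd this (lt_irrefl 1)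
  have hγγ : star γ * γ = 1 := by
    rw [Complex.star_def, mul_comm, Complex.mul_conj]
    rw [Complex.normSq_eq_norm_sq, habs]
    norm_num
  have hγ0 : γ ≠ 0 := by
    intro h; rw [h] at habs; simp at habs
  set Q' : Matrix (Fin n) (Fin n) ℂ := γ • Q with hQ'
  have hQ'mem : Q' ∈ Matrix.unitaryGroup (Fin n) ℂ := by
    rw [Matrix.mem_unitaryGroup_iff']
    rw [hQ', star_smul, Matrix.smul_mul, Matrix.mul_smul, smul_smul, hQH, hQQ, hγγ, one_smul]
  have hQ'det : Q'.det = 1 := by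
    rw [hQ', Matrix.det_smul, Fintype.card_fin, hγc, ← hc, hcc]
  have hQ'A : Q' * A = A * Q' := by
    rw [hQ', Matrix.smul_mul, Matrix.mul_smul, hQ, Matrix.sub_mul, Matrix.mul_sub, one_mul,
      mul_one, Matrix.smul_mul, Matrix.mul_smul, hPA]
  have hQ'B : Q' * B = B * Q' := by
    rw [hQ', Matrix.smul_mul, Matrix.mul_smul, hQ, Matrix.sub_mul, Matrix.mul_sub, one_mul,
      mul_one, Matrix.smul_mul, Matrix.mul_smul, hPB]
  obtain ⟨ω'', hω''n, hQ'eq⟩ := hirr ⟨Q', hQ'mem⟩ hQ'det (Subtype.ext hQ'A) (Subtype.ext hQ'B)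
  -- derive the contradiction
  have hTQ : Matrix.toEuclideanLin Q = LinearMap.id - (2:ℂ) • p := by
    rw [hQ, map_sub, LinearEquiv.map_smul, tEone, hPp]
  have happly : ∀ x : EuclideanSpace ℂ (Fin n), γ • (x - (2:ℂ) • p x) = ω'' • x := by
    intro x
    have h3 : Matrix.toEuclideanLin Q'
        = Matrix.toEuclideanLin (ω'' • (1 : Matrix (Fin n) (Fin n) ℂ)) := congrArg _ hQ'eq
    rw [hQ', LinearEquiv.map_smul, LinearEquiv.map_smul, hTQ, tEone] at h3
    have h4 := LinearMap.congr_fun h3 x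
    rw [LinearMap.smul_apply, LinearMap.smul_apply, LinearMap.sub_apply, LinearMap.smul_apply,
      LinearMap.id_apply] at h4
    exact h4
  have hωγ : ω'' = -γ := by
    have h4 := happly v
    rw [hpself v hvW] at h4
    have h5 : (-γ) • v = ω'' • v := by rw [← h4]; module
    have h6 : ((-γ) - ω'') • v = 0 := by rw [sub_smul, h5, sub_self]
    rcases smul_eq_zero.mp h6 with h | h
    · linear_combination -h
    · exact absurd h hv0
  obtain ⟨u, huW, hu0⟩ := (Submodule.ne_bot_iff Wᗮ).mp
    (by rwa [ne_eq, Submodule.orthogonal_eq_bot_iff])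
  have h7 := happly u
  rw [hpperp u huW, hωγ] at h7
  simp only [smul_zero, sub_zero] at h7
  have h8 : (γ + γ) • u = 0 := by
    rw [add_smul]
    nth_rewrite 2 [h7]
    rw [neg_smul]
    simp
  rcases smul_eq_zero.mp h8 with h | h
  · exact hγ0 (add_self_eq_zero.mp h)
  · exact hu0 h
end

section
/- Let n ≥ 2 and let ζ ∈ ℂ be a primitive n-th root of unity. If (a,b) and (a',b') are pairs of elements of SL(n,ℂ) with a b a⁻¹ b⁻¹ = ζ·I and a' b' a'⁻¹ b'⁻¹ = ζ·I, then there exists g ∈ SL(n,ℂ) with g a g⁻¹ = a' and g b g⁻¹ = b'. -/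
open Matrix
noncomputable section
namespace PairConj
variable {n : ℕ} [NeZero n] {ζ : ℂ}

def Qm (n : ℕ) [NeZero n] : Matrix (Fin n) (Fin n) ℂ :=
  Matrix.of fun j k => if j = k + 1 then 1 else 0
def Dm (n : ℕ) [NeZero n] (ζ : ℂ) : Matrix (Fin n) (Fin n) ℂ :=
  Matrix.diagonal fun k => ζ⁻¹ ^ (k : ℕ)

lemma val_add_one {k : Fin n} (hn : 2 ≤ n) : ((k + 1 : Fin n) : ℕ) = (k.val + 1) % n := by
  have h1 : (1 : ℕ) % n = 1 := Nat.mod_eq_of_lt (by omega)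
  rw [Fin.val_add, Fin.val_one', h1]

lemma QD_rel (hn : 2 ≤ n) (hζ : IsPrimitiveRoot ζ n) :
    Qm n * Dm n ζ = ζ • (Dm n ζ * Qm n) := by
  have hζ0 : ζ ≠ 0 := hζ.ne_zero (by omega)
  have hzn : (ζ⁻¹) ^ n = 1 := hζ.inv.pow_eq_one
  ext j k
  simp only [Qm, Dm, Matrix.mul_diagonal, Matrix.diagonal_mul, Matrix.smul_apply, Matrix.of_apply,
    smul_eq_mul]
  by_cases h : j = k + 1
  · subst h
    simp only [if_pos rfl, if_true, one_mul, mul_one]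
    rw [val_add_one hn]
    rcases Nat.lt_or_ge (k.val + 1) n with h1 | h1
    · rw [Nat.mod_eq_of_lt h1, pow_succ]
      field_simp
    · have h2 : k.val + 1 = n := by omega
      rw [h2, Nat.mod_self, pow_zero, mul_one]
      have h3 : ζ⁻¹ ^ (k.val) * ζ⁻¹ = 1 := by rw [← pow_succ, h2, hzn]
      have h4 : ζ⁻¹ ^ (k.val) = ζ := by
        calc ζ⁻¹ ^ (k.val) = ζ⁻¹ ^ (k.val) * ζ⁻¹ * ζ := by field_simp
        _ = ζ := by rw [h3, one_mul]
      rw [h4]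
  · simp [h]

lemma DQ_rel (hn : 2 ≤ n) (hζ : IsPrimitiveRoot ζ n) :
    Dm n ζ * Qm n = ζ⁻¹ • (Qm n * Dm n ζ) := by
  have hζ0 : ζ ≠ 0 := hζ.ne_zero (by omega)
  rw [QD_rel hn hζ, smul_smul, inv_mul_cancel₀ hζ0, one_smul]

lemma Dpow_Q (hn : 2 ≤ n) (hζ : IsPrimitiveRoot ζ n) (i : ℕ) :
    (Dm n ζ) ^ i * Qm n = (ζ⁻¹) ^ i • (Qm n * (Dm n ζ) ^ i) := by
  induction i with
  | zero => simp
  | succ i ih =>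
    rw [pow_succ, mul_assoc, DQ_rel hn hζ, mul_smul_comm, ← mul_assoc, ih,
      smul_mul_assoc, smul_smul, pow_succ, mul_assoc]
    congr 1
    ring

lemma Qpow_D (hn : 2 ≤ n) (hζ : IsPrimitiveRoot ζ n) (j : ℕ) :
    (Qm n) ^ j * Dm n ζ = ζ ^ j • (Dm n ζ * (Qm n) ^ j) := by
  induction j with
  | zero => simp
  | succ j ih =>
    rw [pow_succ, mul_assoc, QD_rel hn hζ, mul_smul_comm, ← mul_assoc, ih,
      smul_mul_assoc, smul_smul, pow_succ, mul_assoc]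
    congr 1
    ring

lemma Dpow_smulQ (hn : 2 ≤ n) (hζ : IsPrimitiveRoot ζ n) (i : ℕ) (d : ℂ) :
    (Dm n ζ) ^ i * (d • Qm n) = (((ζ⁻¹) ^ i * d) • Qm n) * (Dm n ζ) ^ i := by
  rw [mul_smul_comm, Dpow_Q hn hζ, smul_smul, smul_mul_assoc, mul_comm d]

lemma Qpow_smulD (hn : 2 ≤ n) (hζ : IsPrimitiveRoot ζ n) (j : ℕ) (μ : ℂ) :
    (Qm n) ^ j * (μ • Dm n ζ) = ((ζ ^ j * μ) • Dm n ζ) * (Qm n) ^ j := by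
  rw [mul_smul_comm, Qpow_D hn hζ, smul_smul, smul_mul_assoc, mul_comm μ]

lemma Qpow_smulQ (j : ℕ) (d : ℂ) :
    (Qm n) ^ j * (d • Qm n) = (d • Qm n) * (Qm n) ^ j := by
  rw [mul_smul_comm, smul_mul_assoc, ((Commute.refl (Qm n)).pow_left j).eq]

lemma Dpow_smulD (i : ℕ) (μ : ℂ) :
    (Dm n ζ) ^ i * (μ • Dm n ζ) = (μ • Dm n ζ) * (Dm n ζ) ^ i := by
  rw [mul_smul_comm, smul_mul_assoc, ((Commute.refl (Dm n ζ)).pow_left i).eq]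

lemma std_form (hn : 2 ≤ n) (hζ : IsPrimitiveRoot ζ n)
    (A B : Matrix (Fin n) (Fin n) ℂ) (hA : IsUnit A) (hB : IsUnit B)
    (hAB : A * B = ζ • (B * A)) :
    ∃ (G : (Matrix (Fin n) (Fin n) ℂ)ˣ) (d μ : ℂ),
      A * (G : Matrix (Fin n) (Fin n) ℂ) = (G : Matrix (Fin n) (Fin n) ℂ) * (d • Qm n) ∧
      B * (G : Matrix (Fin n) (Fin n) ℂ) = (G : Matrix (Fin n) (Fin n) ℂ) * (μ • Dm n ζ) := by
  haveI : Nonempty (Fin n) := ⟨⟨0, by omega⟩⟩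
  have hζ0 : ζ ≠ 0 := hζ.ne_zero (by omega)
  have hzi : IsPrimitiveRoot ζ⁻¹ n := hζ.inv
  have hBA : B * A = ζ⁻¹ • (A * B) := by
    rw [hAB, smul_smul, inv_mul_cancel₀ hζ0, one_smul]
  set f : Module.End ℂ (Fin n → ℂ) := Matrix.mulVecLin B with hf
  obtain ⟨μ, hμ⟩ := Module.End.exists_eigenvalue f
  obtain ⟨v, hv⟩ := hμ.exists_hasEigenvector
  have hv0 : v ≠ 0 := hv.right
  have hBv : B.mulVec v = μ • v := by
    have := hv.apply_eq_smul; simpa only [hf, Matrix.mulVecLin_apply] using this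
  -- units act injectively via mulVec
  have hUmv : ∀ (U : (Matrix (Fin n) (Fin n) ℂ)ˣ) (x : Fin n → ℂ),
      (U : Matrix (Fin n) (Fin n) ℂ).mulVec x = 0 → x = 0 := by
    intro U x hx
    have h2 := congrArg (fun y => ((U⁻¹ : (Matrix (Fin n) (Fin n) ℂ)ˣ) :
      Matrix (Fin n) (Fin n) ℂ).mulVec y) hx
    simp only [Matrix.mulVec_mulVec, Matrix.mulVec_zero] at h2
    rwa [Units.inv_mul, Matrix.one_mulVec] at h2
  have hμ0 : μ ≠ 0 := by
    intro h
    apply hv0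
    apply hUmv hB.unit
    rw [IsUnit.unit_spec, hBv, h, zero_smul]
  have hBw : ∀ m : ℕ, B.mulVec ((A ^ m).mulVec v)
      = ((ζ⁻¹) ^ m * μ) • (A ^ m).mulVec v := by
    intro m
    induction m with
    | zero => simpa using hBv
    | succ m ih =>
      have h1 : (A ^ (m+1)).mulVec v = A.mulVec ((A ^ m).mulVec v) := by
        rw [Matrix.mulVec_mulVec, ← pow_succ']
      rw [h1, Matrix.mulVec_mulVec, hBA, Matrix.smul_mulVec,
        ← Matrix.mulVec_mulVec, ih, Matrix.mulVec_smul, Matrix.mulVec_mulVec, ← pow_succ',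
        smul_smul, ← mul_assoc, ← pow_succ']
  set eig : Fin n → ℂ := fun k => ζ⁻¹ ^ (k : ℕ) * μ with heig
  set w : Fin n → (Fin n → ℂ) := fun k => (A ^ (k : ℕ)).mulVec v with hw
  have hApow : ∀ m : ℕ, ((hA.unit ^ m : (Matrix (Fin n) (Fin n) ℂ)ˣ) :
      Matrix (Fin n) (Fin n) ℂ) = A ^ m := by
    intro m; rw [Units.val_pow_eq_pow_val, IsUnit.unit_spec]
  have hw0 : ∀ k : Fin n, w k ≠ 0 := by
    intro k h
    exact hv0 (hUmv (hA.unit ^ (k : ℕ)) v (by rwa [hApow]))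
  have hinj : Function.Injective eig := by
    intro k l h
    have h2 : ζ⁻¹ ^ (k : ℕ) = ζ⁻¹ ^ (l : ℕ) := mul_right_cancel₀ hμ0 h
    exact Fin.ext (hzi.pow_inj k.isLt l.isLt h2)
  have hfw : ∀ k, f (w k) = eig k • w k := by
    intro k; simpa only [hf, Matrix.mulVecLin_apply, hw, heig] using hBw (k : ℕ)
  have hEV : ∀ k, f.HasEigenvector (eig k) (w k) := fun k =>
    Module.End.hasEigenvector_iff.mpr ⟨Module.End.mem_eigenspace_iff.mpr (hfw k), hw0 k⟩
  have li := f.eigenvectors_linearIndependent' eig hinj w hEV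
  have hcard : Fintype.card (Fin n) = Module.finrank ℂ (Fin n → ℂ) := by simp
  set bas := basisOfLinearIndependentOfCardEqFinrank li hcard with hbasdef
  have hbask : ∀ k, bas k = w k := fun k =>
    congrFun (coe_basisOfLinearIndependentOfCardEqFinrank li hcard) k
  set uN := (A ^ n).mulVec v with huN
  have hBuN : f uN = μ • uN := by
    have h2 := hBw n
    rw [hzi.pow_eq_one, one_mul] at h2
    simpa only [hf, Matrix.mulVecLin_apply, huN] using h2
  set c : Fin n → ℂ := fun k => bas.repr uN k with hc
  have hrep : ∑ k, c k • w k = uN := by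
    have := bas.sum_repr uN
    simpa [hbask] using this
  have h0 : ∑ k, (c k * eig k - μ * c k) • w k = 0 := by
    have e1 : f uN = ∑ k, (c k * eig k) • w k := by
      conv_lhs => rw [← hrep]
      rw [map_sum]
      congr 1; funext k
      rw [_root_.map_smul, hfw k, smul_smul]
    have e3 : μ • uN = ∑ k, (μ * c k) • w k := by
      rw [← hrep, Finset.smul_sum]
      congr 1; funext k
      rw [smul_smul]
    have e4 := e1.symm.trans (hBuN.trans e3)
    rw [← sub_eq_zero, ← Finset.sum_sub_distrib] at e4
    simpa [sub_smul] using e4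
  have hcoef := Fintype.linearIndependent_iff.mp li _ h0
  have hck : ∀ k : Fin n, k ≠ 0 → c k = 0 := by
    intro k hk
    have h2 := hcoef k
    have h3 : c k * (eig k - μ) = 0 := by linear_combination h2
    rcases mul_eq_zero.mp h3 with h4 | h4
    · exact h4
    · exfalso
      have h5 : ζ⁻¹ ^ (k : ℕ) = 1 := by
        have h6 : eig k = μ := by linear_combination h4
        rw [heig] at h6
        simp only at h6
        exact mul_right_cancel₀ hμ0 (by rw [h6, one_mul])
      have hkpos : 0 < (k : ℕ) := Nat.pos_of_ne_zero (fun h => hk (Fin.ext (by simp [h])))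
      exact hzi.pow_ne_one_of_pos_of_lt hkpos.ne' k.isLt h5
  have hc0v : uN = c 0 • v := by
    rw [← hrep, Finset.sum_eq_single 0]
    · congr 1
      rw [hw]
      simp
    · intro k _ hk
      rw [hck k hk, zero_smul]
    · intro h
      exact absurd (Finset.mem_univ 0) h
  have huN0 : uN ≠ 0 := by
    intro h
    exact hv0 (hUmv (hA.unit ^ n) v (by rwa [hApow]))
  have hcne : c 0 ≠ 0 := by
    intro h
    rw [h, zero_smul] at hc0v
    exact huN0 hc0v
  obtain ⟨d, hd⟩ := IsAlgClosed.exists_pow_nat_eq (c 0) (show 0 < n by omega)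
  have hd0 : d ≠ 0 := by
    rintro rfl
    rw [zero_pow (by omega : n ≠ 0)] at hd
    exact hcne hd.symm
  set u : Fin n → (Fin n → ℂ) := fun k => (d⁻¹) ^ (k : ℕ) • w k with hu
  have hu_eig : ∀ k, f.HasEigenvector (eig k) (u k) := by
    intro k
    refine Module.End.hasEigenvector_iff.mpr ⟨Module.End.mem_eigenspace_iff.mpr ?_, ?_⟩
    · show f (u k) = eig k • u k
      have h2 : u k = d⁻¹ ^ (k : ℕ) • w k := by rw [hu]
      rw [h2, _root_.map_smul, hfw k, smul_comm]
    · exact smul_ne_zero (pow_ne_zero _ (inv_ne_zero hd0)) (hw0 k)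
  have li2 := f.eigenvectors_linearIndependent' eig hinj u hu_eig
  set bas2 := basisOfLinearIndependentOfCardEqFinrank li2 hcard with hbas2def
  have hbas2k : ∀ k, bas2 k = u k := fun k =>
    congrFun (coe_basisOfLinearIndependentOfCardEqFinrank li2 hcard) k
  set g : Matrix (Fin n) (Fin n) ℂ := Matrix.of (fun i k => u k i) with hgdef
  have hgtm : g = (Pi.basisFun ℂ (Fin n)).toMatrix ⇑bas2 := by
    ext i k
    rw [Module.Basis.toMatrix_apply, Pi.basisFun_repr, hbas2k]
    rfl
  have hg : IsUnit g := by
    rw [hgtm]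
    have hinv := (Pi.basisFun ℂ (Fin n)).invertibleToMatrix bas2
    exact isUnit_of_invertible _
  have hBu : ∀ k, B.mulVec (u k) = eig k • u k := by
    intro k
    have := (hu_eig k).apply_eq_smul
    simpa only [hf, Matrix.mulVecLin_apply] using this
  have hRu : ∀ k : Fin n, u k = (d⁻¹) ^ (k : ℕ) • (A ^ (k : ℕ)).mulVec v := by
    intro k; rw [hu, hw]
  have hAu : ∀ k : Fin n, A.mulVec (u k) = d • u (k + 1) := by
    intro k
    have hL : A.mulVec (u k) = (d⁻¹) ^ (k : ℕ) • (A ^ ((k : ℕ) + 1)).mulVec v := by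
      rw [hRu k]
      rw [Matrix.mulVec_smul, Matrix.mulVec_mulVec, ← pow_succ']
    rcases Nat.lt_or_ge ((k : ℕ) + 1) n with h1 | h1
    · have hval : ((k + 1 : Fin n) : ℕ) = (k : ℕ) + 1 := by
        rw [val_add_one hn, Nat.mod_eq_of_lt h1]
      rw [hL, hRu (k + 1), hval, smul_smul]
      congr 1
      rw [pow_succ]
      field_simp
    · have h2 : (k : ℕ) + 1 = n := by omega
      have hval : ((k + 1 : Fin n) : ℕ) = 0 := by
        rw [val_add_one hn, h2, Nat.mod_self]
      rw [hL]
      rw [h2]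
      rw [← huN]
      rw [hc0v]
      rw [hRu (k + 1)]
      rw [hval]
      rw [smul_smul]
      have hsc : d⁻¹ ^ (k : ℕ) * c 0 = d := by
        have h6 : d ^ n = d ^ (k : ℕ) * d := by rw [← pow_succ, h2]
        rw [← hd, h6, inv_pow, inv_mul_cancel_left₀ (pow_ne_zero _ hd0)]
      rw [hsc]
      simp [Matrix.one_mulVec]
  have hAg : A * g = g * (d • Qm n) := by
    ext i k
    have hL : (A * g) i k = (A.mulVec (u k)) i := by
      simp [Matrix.mul_apply, Matrix.mulVec, dotProduct, hgdef]
    have hR : (g * (d • Qm n)) i k = d * u (k + 1) i := by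
      rw [Matrix.mul_apply]
      simp only [Matrix.smul_apply, Qm, Matrix.of_apply, smul_eq_mul, hgdef,
        mul_ite, mul_one, mul_zero]
      rw [Finset.sum_ite_eq' Finset.univ (k + 1) (fun j => u j i * d)]
      simp [mul_comm]
    rw [hL, hR, hAu k]
    simp
  have hBg : B * g = g * (μ • Dm n ζ) := by
    ext i k
    have hL : (B * g) i k = (B.mulVec (u k)) i := by
      simp [Matrix.mul_apply, Matrix.mulVec, dotProduct, hgdef]
    have hR : (g * (μ • Dm n ζ)) i k = u k i * (μ * ζ⁻¹ ^ (k : ℕ)) := by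
      rw [Matrix.mul_apply]
      simp only [Matrix.smul_apply, Dm, Matrix.diagonal_apply, Matrix.of_apply, smul_eq_mul,
        hgdef, mul_ite, mul_one, mul_zero]
      rw [Finset.sum_ite_eq' Finset.univ k (fun j => u j i * (μ * ζ⁻¹ ^ (j : ℕ)))]
      simp
    rw [hL, hR, hBu k]
    simp only [Pi.smul_apply, smul_eq_mul, heig]
    ring
  exact ⟨hg.unit, d, μ, by rw [IsUnit.unit_spec]; exact hAg,
    by rw [IsUnit.unit_spec]; exact hBg⟩

lemma coe_comm_rel {n : ℕ} (ζ : ℂ)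
    (a b : Matrix.SpecialLinearGroup (Fin n) ℂ)
    (hab : ((a * b * a⁻¹ * b⁻¹ : Matrix.SpecialLinearGroup (Fin n) ℂ) :
        Matrix (Fin n) (Fin n) ℂ) = ζ • (1 : Matrix (Fin n) (Fin n) ℂ)) :
    (a : Matrix (Fin n) (Fin n) ℂ) * (b : Matrix (Fin n) (Fin n) ℂ)
      = ζ • ((b : Matrix (Fin n) (Fin n) ℂ) * (a : Matrix (Fin n) (Fin n) ℂ)) := by
  have h1 : (a * b : Matrix.SpecialLinearGroup (Fin n) ℂ)
      = (a * b * a⁻¹ * b⁻¹) * (b * a) := by group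
  have h2 : ((a * b : Matrix.SpecialLinearGroup (Fin n) ℂ) : Matrix (Fin n) (Fin n) ℂ)
      = ((a * b * a⁻¹ * b⁻¹ : Matrix.SpecialLinearGroup (Fin n) ℂ) :
          Matrix (Fin n) (Fin n) ℂ) *
        ((b * a : Matrix.SpecialLinearGroup (Fin n) ℂ) : Matrix (Fin n) (Fin n) ℂ) := by
    rw [← Matrix.SpecialLinearGroup.coe_mul, ← h1]
  rw [hab, Matrix.SpecialLinearGroup.coe_mul, Matrix.SpecialLinearGroup.coe_mul] at h2
  rw [h2, smul_mul_assoc, one_mul]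

lemma inv_conj {n : ℕ} (X Y : Matrix (Fin n) (Fin n) ℂ)
    (G : (Matrix (Fin n) (Fin n) ℂ)ˣ)
    (h : X * (G : Matrix (Fin n) (Fin n) ℂ) = (G : Matrix (Fin n) (Fin n) ℂ) * Y) :
    ((G⁻¹ : (Matrix (Fin n) (Fin n) ℂ)ˣ) : Matrix (Fin n) (Fin n) ℂ) * X
      = Y * ((G⁻¹ : (Matrix (Fin n) (Fin n) ℂ)ˣ) : Matrix (Fin n) (Fin n) ℂ) := by
  calc ((G⁻¹ : (Matrix (Fin n) (Fin n) ℂ)ˣ) : Matrix (Fin n) (Fin n) ℂ) * X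
      = ↑G⁻¹ * (X * ↑G) * ↑G⁻¹ := by
        rw [mul_assoc, mul_assoc, Units.mul_inv, mul_one]
    _ = ↑G⁻¹ * (↑G * Y) * ↑G⁻¹ := by rw [h]
    _ = Y * ↑G⁻¹ := by rw [← mul_assoc, Units.inv_mul, one_mul]

end PairConj

/-- For `n ≥ 2` and `ζ` a primitive `n`-th root of unity, any two pairs in `SL(n,ℂ)`
with commutator `ζ·I` are conjugate by an element of `SL(n,ℂ)`. -/
theorem pairs_with_commutator_primitive_root_conjugate_SL
    (n : ℕ) (hn : 2 ≤ n) (ζ : ℂ) (hζ : IsPrimitiveRoot ζ n)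
    (a b a' b' : Matrix.SpecialLinearGroup (Fin n) ℂ)
    (hab : ((a * b * a⁻¹ * b⁻¹ : Matrix.SpecialLinearGroup (Fin n) ℂ) :
        Matrix (Fin n) (Fin n) ℂ) = ζ • (1 : Matrix (Fin n) (Fin n) ℂ))
    (hab' : ((a' * b' * a'⁻¹ * b'⁻¹ : Matrix.SpecialLinearGroup (Fin n) ℂ) :
        Matrix (Fin n) (Fin n) ℂ) = ζ • (1 : Matrix (Fin n) (Fin n) ℂ)) :
    ∃ g : Matrix.SpecialLinearGroup (Fin n) ℂ,
      g * a * g⁻¹ = a' ∧ g * b * g⁻¹ = b' := by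
  haveI : NeZero n := ⟨by omega⟩
  have hζ0 : ζ ≠ 0 := hζ.ne_zero (by omega)
  have hdetcoe : ∀ x : Matrix.SpecialLinearGroup (Fin n) ℂ,
      IsUnit (x : Matrix (Fin n) (Fin n) ℂ) := by
    intro x
    rw [Matrix.isUnit_iff_isUnit_det, x.prop]
    exact isUnit_one
  have hc1 := PairConj.coe_comm_rel ζ a b hab
  have hc2 := PairConj.coe_comm_rel ζ a' b' hab'
  obtain ⟨G₁, d, μ, h1A, h1B⟩ :=
    PairConj.std_form hn hζ _ _ (hdetcoe a) (hdetcoe b) hc1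
  obtain ⟨G₂, d', μ', h2A, h2B⟩ :=
    PairConj.std_form hn hζ _ _ (hdetcoe a') (hdetcoe b') hc2
  have hdetG : ∀ (G : (Matrix (Fin n) (Fin n) ℂ)ˣ),
      Matrix.det (G : Matrix (Fin n) (Fin n) ℂ) ≠ 0 := fun G =>
    ((Matrix.isUnit_iff_isUnit_det _).mp G.isUnit).ne_zero
  have key : ∀ (x : Matrix.SpecialLinearGroup (Fin n) ℂ)
      (G : (Matrix (Fin n) (Fin n) ℂ)ˣ) (X : Matrix (Fin n) (Fin n) ℂ),
      (x : Matrix (Fin n) (Fin n) ℂ) * G = (G : Matrix (Fin n) (Fin n) ℂ) * X →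
      Matrix.det X = 1 := by
    intro x G X hX
    have h3 := congrArg Matrix.det hX
    rw [Matrix.det_mul, Matrix.det_mul, x.prop, one_mul] at h3
    exact mul_left_cancel₀ (hdetG G) (by rw [mul_one]; exact h3.symm)
  have hdQ : d ^ n * Matrix.det (PairConj.Qm n) = 1 := by
    have h4 := key a G₁ _ h1A
    rwa [Matrix.det_smul, Fintype.card_fin] at h4
  have hd'Q : d' ^ n * Matrix.det (PairConj.Qm n) = 1 := by
    have h4 := key a' G₂ _ h2A
    rwa [Matrix.det_smul, Fintype.card_fin] at h4
  have hmD : μ ^ n * Matrix.det (PairConj.Dm n ζ) = 1 := by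
    have h4 := key b G₁ _ h1B
    rwa [Matrix.det_smul, Fintype.card_fin] at h4
  have hm'D : μ' ^ n * Matrix.det (PairConj.Dm n ζ) = 1 := by
    have h4 := key b' G₂ _ h2B
    rwa [Matrix.det_smul, Fintype.card_fin] at h4
  have hq0 : Matrix.det (PairConj.Qm n) ≠ 0 := fun h => by simp [h] at hdQ
  have hD0 : Matrix.det (PairConj.Dm n ζ) ≠ 0 := fun h => by simp [h] at hmD
  have hd0 : d ≠ 0 := fun h => by
    rw [h, zero_pow (show n ≠ 0 by omega), zero_mul] at hdQ
    exact zero_ne_one hdQ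
  have hμ0 : μ ≠ 0 := fun h => by
    rw [h, zero_pow (show n ≠ 0 by omega), zero_mul] at hmD
    exact zero_ne_one hmD
  have hdd : (d' / d) ^ n = 1 := by
    have h5 : d' ^ n = d ^ n := mul_right_cancel₀ hq0 (hd'Q.trans hdQ.symm)
    rw [div_pow, h5, div_self (pow_ne_zero _ hd0)]
  have hmm : (μ' / μ) ^ n = 1 := by
    have h5 : μ' ^ n = μ ^ n := mul_right_cancel₀ hD0 (hm'D.trans hmD.symm)
    rw [div_pow, h5, div_self (pow_ne_zero _ hμ0)]
  obtain ⟨i, -, hi⟩ := hζ.inv.eq_pow_of_pow_eq_one hdd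
  obtain ⟨j, -, hj⟩ := hζ.eq_pow_of_pow_eq_one hmm
  have hdi : ζ⁻¹ ^ i * d = d' := by rw [hi]; field_simp
  have hmj : ζ ^ j * μ = μ' := by rw [hj]; field_simp
  have hQu : IsUnit (PairConj.Qm n) :=
    (Matrix.isUnit_iff_isUnit_det _).mpr (isUnit_iff_ne_zero.mpr hq0)
  have hDu : IsUnit (PairConj.Dm n ζ) :=
    (Matrix.isUnit_iff_isUnit_det _).mpr (isUnit_iff_ne_zero.mpr hD0)
  set hmat : Matrix (Fin n) (Fin n) ℂ :=
    (G₂ : Matrix (Fin n) (Fin n) ℂ) *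
      ((PairConj.Dm n ζ) ^ i * ((PairConj.Qm n) ^ j *
        ((G₁⁻¹ : (Matrix (Fin n) (Fin n) ℂ)ˣ) : Matrix (Fin n) (Fin n) ℂ))) with hmdef
  have hhA : hmat * (a : Matrix (Fin n) (Fin n) ℂ)
      = (a' : Matrix (Fin n) (Fin n) ℂ) * hmat := by
    rw [hmdef]
    simp only [mul_assoc]
    rw [PairConj.inv_conj _ _ _ h1A]
    rw [← mul_assoc ((PairConj.Qm n) ^ j) (d • PairConj.Qm n)]
    rw [PairConj.Qpow_smulQ j d]
    simp only [mul_assoc]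
    rw [← mul_assoc ((PairConj.Dm n ζ) ^ i) (d • PairConj.Qm n)]
    rw [PairConj.Dpow_smulQ hn hζ i d, hdi]
    simp only [mul_assoc]
    rw [← mul_assoc ((G₂ : (Matrix (Fin n) (Fin n) ℂ)ˣ) : Matrix (Fin n) (Fin n) ℂ)
      (d' • PairConj.Qm n), ← h2A]
    simp only [mul_assoc]
  have hhB : hmat * (b : Matrix (Fin n) (Fin n) ℂ)
      = (b' : Matrix (Fin n) (Fin n) ℂ) * hmat := by
    rw [hmdef]
    simp only [mul_assoc]
    rw [PairConj.inv_conj _ _ _ h1B]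
    rw [← mul_assoc ((PairConj.Qm n) ^ j) (μ • PairConj.Dm n ζ)]
    rw [PairConj.Qpow_smulD hn hζ j μ, hmj]
    simp only [mul_assoc]
    rw [← mul_assoc ((PairConj.Dm n ζ) ^ i) (μ' • PairConj.Dm n ζ)]
    rw [PairConj.Dpow_smulD i μ']
    simp only [mul_assoc]
    rw [← mul_assoc ((G₂ : (Matrix (Fin n) (Fin n) ℂ)ˣ) : Matrix (Fin n) (Fin n) ℂ)
      (μ' • PairConj.Dm n ζ), ← h2B]
    simp only [mul_assoc]
  have hmu : IsUnit hmat := by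
    rw [hmdef]
    exact G₂.isUnit.mul ((hDu.pow i).mul ((hQu.pow j).mul (G₁⁻¹).isUnit))
  have hmdet0 : Matrix.det hmat ≠ 0 :=
    ((Matrix.isUnit_iff_isUnit_det _).mp hmu).ne_zero
  obtain ⟨l, hl⟩ := IsAlgClosed.exists_pow_nat_eq (Matrix.det hmat)⁻¹ (show 0 < n by omega)
  have hdetg : Matrix.det (l • hmat) = 1 := by
    rw [Matrix.det_smul, Fintype.card_fin, hl, inv_mul_cancel₀ hmdet0]
  set g : Matrix.SpecialLinearGroup (Fin n) ℂ := ⟨l • hmat, hdetg⟩ with hgdef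
  refine ⟨g, ?_, ?_⟩
  · rw [mul_inv_eq_iff_eq_mul]
    apply Subtype.ext
    rw [Matrix.SpecialLinearGroup.coe_mul, Matrix.SpecialLinearGroup.coe_mul]
    show (l • hmat) * (a : Matrix (Fin n) (Fin n) ℂ)
      = (a' : Matrix (Fin n) (Fin n) ℂ) * (l • hmat)
    rw [smul_mul_assoc, hhA, mul_smul_comm]
  · rw [mul_inv_eq_iff_eq_mul]
    apply Subtype.ext
    rw [Matrix.SpecialLinearGroup.coe_mul, Matrix.SpecialLinearGroup.coe_mul]
    show (l • hmat) * (b : Matrix (Fin n) (Fin n) ℂ)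
      = (b' : Matrix (Fin n) (Fin n) ℂ) * (l • hmat)
    rw [smul_mul_assoc, hhB, mul_smul_comm]
end
end

section
/- Let n ≥ 2, let a, b ∈ SL(n,ℂ) and ζ ∈ ℂ with a b a⁻¹ b⁻¹ = ζ·I. If the centralizer of {a,b} in SL(n,ℂ) equals the center of SL(n,ℂ) (i.e. every element of SL(n,ℂ) commuting with a and b is a scalar matrix ω·I with ωⁿ = 1), then ζ is a primitive n-th root of unity. -/
open Polynomial Matrix

private lemma aux_mul_aeval {n : ℕ} (A M : Matrix (Fin n) (Fin n) ℂ) (μ : ℂ)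
    (h : M * A = μ • M) (g : ℂ[X]) : M * (aeval A g) = g.eval μ • M := by
  induction g using Polynomial.induction_on with
  | C c => simp [Algebra.algebraMap_eq_smul_one, mul_smul_comm]
  | add p q hp hq => simp [mul_add, hp, hq, add_smul]
  | monomial k c ih =>
      have : (C c * X ^ (k + 1)) = (C c * X ^ k) * X := by ring
      rw [this, _root_.map_mul, aeval_X, ← mul_assoc, ih, smul_mul_assoc, h]
      simp [smul_smul]

private lemma aux_aeval_mul {n : ℕ} (A M : Matrix (Fin n) (Fin n) ℂ) (μ : ℂ)
    (h : A * M = μ • M) (g : ℂ[X]) : (aeval A g) * M = g.eval μ • M := by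
  induction g using Polynomial.induction_on with
  | C c => simp [Algebra.algebraMap_eq_smul_one, smul_mul_assoc]
  | add p q hp hq => simp [add_mul, hp, hq, add_smul]
  | monomial k c ih =>
      have : (C c * X ^ (k + 1)) = X * (C c * X ^ k) := by ring
      rw [this, _root_.map_mul, aeval_X, mul_assoc, ih, mul_smul_comm, h]
      simp [smul_smul]; ring_nf

private lemma aux_aeval_mulVec {n : ℕ} (A : Matrix (Fin n) (Fin n) ℂ) (μ : ℂ)
    (v : Fin n → ℂ) (h : A.mulVec v = μ • v) (g : ℂ[X]) :
    (aeval A g).mulVec v = g.eval μ • v := by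
  induction g using Polynomial.induction_on with
  | C c => simp [Algebra.algebraMap_eq_smul_one, Matrix.smul_mulVec, Matrix.one_mulVec]
  | add p q hp hq => simp [Matrix.add_mulVec, hp, hq, add_smul]
  | monomial k c ih =>
      have : (C c * X ^ (k + 1)) = X * (C c * X ^ k) := by ring
      rw [this, _root_.map_mul, aeval_X, ← Matrix.mulVec_mulVec, ih, Matrix.mulVec_smul, h]
      simp [smul_smul]; ring_nf

private lemma aux_eval_charpoly {n : ℕ} (Y : Matrix (Fin n) (Fin n) ℂ) (t : ℂ) :
    Polynomial.eval t Y.charpoly = Matrix.det (t • (1 : Matrix (Fin n) (Fin n) ℂ) - Y) := by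
  rw [Matrix.charpoly, eval_det, Matrix.matPolyEquiv_charmatrix]
  congr 1
  simp [Algebra.algebraMap_eq_smul_one, Matrix.smul_one_eq_diagonal]

private lemma aux_comm_scalar
    (n : ℕ) (hn : 0 < n)
    (a b : Matrix.SpecialLinearGroup (Fin n) ℂ)
    (hirr : ∀ g : Matrix.SpecialLinearGroup (Fin n) ℂ,
        g * a = a * g → g * b = b * g →
        ∃ ω : ℂ, ω ^ n = 1 ∧
          (g : Matrix (Fin n) (Fin n) ℂ) = ω • (1 : Matrix (Fin n) (Fin n) ℂ))
    (X : Matrix (Fin n) (Fin n) ℂ)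
    (hXA : X * (a : Matrix (Fin n) (Fin n) ℂ) = (a : Matrix (Fin n) (Fin n) ℂ) * X)
    (hXB : X * (b : Matrix (Fin n) (Fin n) ℂ) = (b : Matrix (Fin n) (Fin n) ℂ) * X) :
    ∃ c : ℂ, X = c • 1 := by
  classical
  have hcp : Matrix.charpoly (-X) ≠ 0 := (Matrix.charpoly_monic (-X)).ne_zero
  obtain ⟨t, ht⟩ := ((Polynomial.finite_setOf_isRoot hcp).infinite_compl).nonempty
  have hdet : Matrix.det (t • (1 : Matrix (Fin n) (Fin n) ℂ) + X) ≠ 0 := by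
    have := aux_eval_charpoly (-X) t
    simp only [sub_neg_eq_add] at this
    rw [← this]
    exact ht
  obtain ⟨δ, hδ⟩ := IsAlgClosed.exists_pow_nat_eq (Matrix.det (t • (1 : Matrix (Fin n) (Fin n) ℂ) + X)) hn
  have hδ0 : δ ≠ 0 := by
    intro h; rw [h] at hδ; exact hdet (by rw [← hδ, zero_pow hn.ne'])
  set Z : Matrix (Fin n) (Fin n) ℂ := t • 1 + X with hZ
  have hdetg : Matrix.det (δ⁻¹ • Z) = 1 := by
    rw [Matrix.det_smul, Fintype.card_fin, ← hδ]
    field_simp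
    rw [one_div, ← mul_pow, inv_mul_cancel₀ hδ0, one_pow]
  set g : Matrix.SpecialLinearGroup (Fin n) ℂ := ⟨δ⁻¹ • Z, hdetg⟩ with hg
  have hZA : Z * (a : Matrix (Fin n) (Fin n) ℂ) = (a : Matrix (Fin n) (Fin n) ℂ) * Z := by
    simp only [hZ, add_mul, mul_add, smul_mul_assoc, mul_smul_comm, one_mul, mul_one, hXA]
  have hZB : Z * (b : Matrix (Fin n) (Fin n) ℂ) = (b : Matrix (Fin n) (Fin n) ℂ) * Z := by
    simp only [hZ, add_mul, mul_add, smul_mul_assoc, mul_smul_comm, one_mul, mul_one, hXB]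
  have h1 : g * a = a * g := by
    apply Matrix.SpecialLinearGroup.ext
    intro i j
    have : (δ⁻¹ • Z) * (a : Matrix (Fin n) (Fin n) ℂ) = (a : Matrix (Fin n) (Fin n) ℂ) * (δ⁻¹ • Z) := by
      rw [smul_mul_assoc, mul_smul_comm, hZA]
    have h2 : ((g * a : Matrix.SpecialLinearGroup (Fin n) ℂ) : Matrix (Fin n) (Fin n) ℂ)
        = ((a * g : Matrix.SpecialLinearGroup (Fin n) ℂ) : Matrix (Fin n) (Fin n) ℂ) := by
      rw [Matrix.SpecialLinearGroup.coe_mul, Matrix.SpecialLinearGroup.coe_mul]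
      exact this
    exact congrFun (congrFun h2 i) j
  have h2 : g * b = b * g := by
    apply Matrix.SpecialLinearGroup.ext
    intro i j
    have : (δ⁻¹ • Z) * (b : Matrix (Fin n) (Fin n) ℂ) = (b : Matrix (Fin n) (Fin n) ℂ) * (δ⁻¹ • Z) := by
      rw [smul_mul_assoc, mul_smul_comm, hZB]
    have h2 : ((g * b : Matrix.SpecialLinearGroup (Fin n) ℂ) : Matrix (Fin n) (Fin n) ℂ)
        = ((b * g : Matrix.SpecialLinearGroup (Fin n) ℂ) : Matrix (Fin n) (Fin n) ℂ) := by
      rw [Matrix.SpecialLinearGroup.coe_mul, Matrix.SpecialLinearGroup.coe_mul]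
      exact this
    exact congrFun (congrFun h2 i) j
  obtain ⟨ω, -, hω⟩ := hirr g h1 h2
  have hgZ : (g : Matrix (Fin n) (Fin n) ℂ) = δ⁻¹ • Z := rfl
  refine ⟨δ * ω - t, ?_⟩
  have : Z = (δ * ω) • 1 := by
    rw [hgZ] at hω
    have := congrArg (fun M : Matrix (Fin n) (Fin n) ℂ => δ • M) hω
    simpa [smul_smul, mul_inv_cancel₀ hδ0] using this
  rw [hZ] at this
  rw [sub_smul]
  rw [← this]
  abel

set_option maxHeartbeats 2000000

/-- Let `n ≥ 2` and `a, b ∈ SL(n,ℂ)` with `a b a⁻¹ b⁻¹ = ζ·I`. If the centralizer of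
`{a,b}` in `SL(n,ℂ)` equals the center, then `ζ` is a primitive `n`-th root of unity. -/
theorem irreducible_pair_commutator_primitive_SL
    (n : ℕ) (hn : 2 ≤ n) (ζ : ℂ)
    (a b : Matrix.SpecialLinearGroup (Fin n) ℂ)
    (hab : ((a * b * a⁻¹ * b⁻¹ : Matrix.SpecialLinearGroup (Fin n) ℂ) :
        Matrix (Fin n) (Fin n) ℂ) = ζ • (1 : Matrix (Fin n) (Fin n) ℂ))
    (hirr : ∀ g : Matrix.SpecialLinearGroup (Fin n) ℂ,
        g * a = a * g → g * b = b * g →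
        ∃ ω : ℂ, ω ^ n = 1 ∧
          (g : Matrix (Fin n) (Fin n) ℂ) = ω • (1 : Matrix (Fin n) (Fin n) ℂ)) :
    IsPrimitiveRoot ζ n := by
  classical
  have hn0 : 0 < n := by omega
  set A : Matrix (Fin n) (Fin n) ℂ := ↑a with hAdef
  set B : Matrix (Fin n) (Fin n) ℂ := ↑b with hBdef
  -- ζ^n = 1
  have hζn : ζ ^ n = 1 := by
    have h1 : ((a * b * a⁻¹ * b⁻¹ : Matrix.SpecialLinearGroup (Fin n) ℂ) :
        Matrix (Fin n) (Fin n) ℂ).det = 1 := Matrix.SpecialLinearGroup.det_coe _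
    rw [hab] at h1
    simpa [Matrix.det_smul, Fintype.card_fin] using h1
  have hζ0 : ζ ≠ 0 := by
    intro h; rw [h, zero_pow hn0.ne'] at hζn; exact zero_ne_one hζn
  -- matrix commutation relation
  have hcomm : A * B = ζ • (B * A) := by
    have e : (a * b : Matrix.SpecialLinearGroup (Fin n) ℂ)
        = (a * b * a⁻¹ * b⁻¹) * (b * a) := by group
    have e2 := congrArg
      (fun g : Matrix.SpecialLinearGroup (Fin n) ℂ => (g : Matrix (Fin n) (Fin n) ℂ)) e
    simp only [Matrix.SpecialLinearGroup.coe_mul] at e2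
    rw [show ((a:Matrix (Fin n) (Fin n) ℂ) * B * ↑a⁻¹ * ↑b⁻¹ = ζ • 1) from by
          simpa [Matrix.SpecialLinearGroup.coe_mul] using hab] at e2
    simpa [smul_mul_assoc] using e2
  -- power relations
  have hApow : ∀ i : ℕ, A ^ i * B = ζ ^ i • (B * A ^ i) := by
    intro i
    induction i with
    | zero => simp
    | succ k ih =>
        have h0 : A ^ (k+1) * B = A * (A ^ k * B) := by rw [pow_succ', mul_assoc]
        rw [h0, ih, mul_smul_comm, ← mul_assoc, hcomm, smul_mul_assoc, smul_smul,
          mul_assoc, ← pow_succ', ← pow_succ]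
  have hBpow : ∀ i : ℕ, A * B ^ i = ζ ^ i • (B ^ i * A) := by
    intro i
    induction i with
    | zero => simp
    | succ k ih =>
        have h1 : A * B ^ (k+1) = (A * B) * B ^ k := by rw [pow_succ', ← mul_assoc]
        rw [h1, hcomm, smul_mul_assoc, mul_assoc, ih, mul_smul_comm, smul_smul, ← mul_assoc,
          ← pow_succ']
        rw [← pow_succ']
  -- the order of ζ
  have hζfin : IsOfFinOrder ζ := isOfFinOrder_iff_pow_eq_one.mpr ⟨n, hn0, hζn⟩
  set d := orderOf ζ with hddef
  have hζd : ζ ^ d = 1 := pow_orderOf_eq_one ζ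
  have hd_dvd : d ∣ n := orderOf_dvd_of_pow_eq_one hζn
  have hd0 : 0 < d := hζfin.orderOf_pos
  have hprim : IsPrimitiveRoot ζ d := IsPrimitiveRoot.orderOf ζ
  rcases (Nat.le_of_dvd hn0 hd_dvd).lt_or_eq with hdn | hdn
  swap
  · rwa [hdn] at hprim
  exfalso
  obtain ⟨m, hm⟩ := hd_dvd
  have hm2 : 2 ≤ m := by
    rcases m with _ | _ | m
    · omega
    · omega
    · omega
  -- comm_scalar specialization
  have comm_scalar : ∀ X : Matrix (Fin n) (Fin n) ℂ,
      X * A = A * X → X * B = B * X → ∃ c : ℂ, X = c • 1 :=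
    fun X h1 h2 => aux_comm_scalar n hn0 a b hirr X h1 h2
  -- A ^ d is scalar
  obtain ⟨ω, hω⟩ := comm_scalar (A ^ d)
    (by rw [← pow_succ, ← pow_succ'])
    (by rw [hApow d, hζd, one_smul])
  have hωn : ω ^ n = 1 := by
    have h1 : (A ^ d).det = 1 := by
      rw [Matrix.det_pow, Matrix.SpecialLinearGroup.det_coe, one_pow]
    rw [hω] at h1
    simpa [Matrix.det_smul, Fintype.card_fin] using h1
  have hω0 : ω ≠ 0 := by
    intro h; rw [h, zero_pow hn0.ne'] at hωn; exact zero_ne_one hωn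
  -- B ^ d is scalar
  obtain ⟨ω', hω'⟩ := comm_scalar (B ^ d)
    (by
      have := hBpow d
      rw [hζd, one_smul] at this
      exact this.symm)
    (by rw [← pow_succ, ← pow_succ'])
  have hω'n : ω' ^ n = 1 := by
    have h1 : (B ^ d).det = 1 := by
      rw [Matrix.det_pow, Matrix.SpecialLinearGroup.det_coe, one_pow]
    rw [hω'] at h1
    simpa [Matrix.det_smul, Fintype.card_fin] using h1
  have hω'0 : ω' ≠ 0 := by
    intro h; rw [h, zero_pow hn0.ne'] at hω'n; exact zero_ne_one hω'n
  -- inverse of B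
  set B' : Matrix (Fin n) (Fin n) ℂ := ((b⁻¹ : Matrix.SpecialLinearGroup (Fin n) ℂ) :
    Matrix (Fin n) (Fin n) ℂ) with hB'def
  have hBB' : ∀ i : ℕ, B ^ i * B' ^ i = 1 := by
    intro i
    have e : (b ^ i * (b⁻¹) ^ i : Matrix.SpecialLinearGroup (Fin n) ℂ) = 1 := by group
    have e2 := congrArg
      (fun g : Matrix.SpecialLinearGroup (Fin n) ℂ => (g : Matrix (Fin n) (Fin n) ℂ)) e
    simp only [Matrix.SpecialLinearGroup.coe_mul, Matrix.SpecialLinearGroup.coe_pow,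
      Matrix.SpecialLinearGroup.coe_one] at e2
    exact e2
  have hB'B : ∀ i : ℕ, B' ^ i * B ^ i = 1 := by
    intro i
    have e : ((b⁻¹) ^ i * b ^ i : Matrix.SpecialLinearGroup (Fin n) ℂ) = 1 := by group
    have e2 := congrArg
      (fun g : Matrix.SpecialLinearGroup (Fin n) ℂ => (g : Matrix (Fin n) (Fin n) ℂ)) e
    simp only [Matrix.SpecialLinearGroup.coe_mul, Matrix.SpecialLinearGroup.coe_pow,
      Matrix.SpecialLinearGroup.coe_one] at e2
    exact e2
  have hB'd : B' ^ d = ω'⁻¹ • 1 := by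
    have h1 := hBB' d
    rw [hω', smul_mul_assoc, one_mul] at h1
    have h2 : ω'⁻¹ • (ω' • B' ^ d) = ω'⁻¹ • (1 : Matrix (Fin n) (Fin n) ℂ) := by rw [h1]
    rw [smul_smul, inv_mul_cancel₀ hω'0, one_smul] at h2
    exact h2
  have hB'A : ∀ i : ℕ, B' ^ i * A = ζ ^ i • (A * B' ^ i) := by
    intro i
    have h := hBpow i
    have h2 : B' ^ i * (A * B ^ i) * B' ^ i = B' ^ i * (ζ ^ i • (B ^ i * A)) * B' ^ i := by
      rw [h]
    calc B' ^ i * A = B' ^ i * A * (B ^ i * B' ^ i) := by rw [hBB' i, mul_one]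
      _ = B' ^ i * (A * B ^ i) * B' ^ i := by noncomm_ring
      _ = B' ^ i * (ζ ^ i • (B ^ i * A)) * B' ^ i := h2
      _ = ζ ^ i • ((B' ^ i * B ^ i) * (A * B' ^ i)) := by
            rw [mul_smul_comm, smul_mul_assoc]; congr 1; noncomm_ring
      _ = ζ ^ i • (A * B' ^ i) := by rw [hB'B i, one_mul]
  -- eigenvector of A
  haveI : Nonempty (Fin n) := ⟨⟨0, hn0⟩⟩
  obtain ⟨μ, hμ⟩ := Module.End.exists_eigenvalue (Matrix.mulVecLin A)
  obtain ⟨v, hv⟩ := hμ.exists_hasEigenvector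
  have hv0 : v ≠ 0 := hv.right
  have hAv : A.mulVec v = μ • v := by
    have := hv.apply_eq_smul
    simpa [Matrix.mulVecLin_apply] using this
  have hμ0 : μ ≠ 0 := by
    intro h
    rw [h, zero_smul] at hAv
    have hA'A : ((a⁻¹ : Matrix.SpecialLinearGroup (Fin n) ℂ) :
        Matrix (Fin n) (Fin n) ℂ) * A = 1 := by
      have e : (a⁻¹ * a : Matrix.SpecialLinearGroup (Fin n) ℂ) = 1 := by group
      have e2 := congrArg
        (fun g : Matrix.SpecialLinearGroup (Fin n) ℂ => (g : Matrix (Fin n) (Fin n) ℂ)) e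
      simp only [Matrix.SpecialLinearGroup.coe_mul, Matrix.SpecialLinearGroup.coe_one] at e2
      exact e2
    have : v = 0 := by
      have h3 := congrArg (fun M : Matrix (Fin n) (Fin n) ℂ => M.mulVec v) hA'A
      simp only [← Matrix.mulVec_mulVec, hAv, Matrix.mulVec_zero, Matrix.one_mulVec] at h3
      exact h3.symm
    exact hv0 this
  have hμd : μ ^ d = ω := by
    have h1 : (A ^ d).mulVec v = μ ^ d • v := by
      have := aux_aeval_mulVec A μ v hAv (X ^ d)
      simpa using this
    rw [hω] at h1
    have h2 : (μ ^ d - ω) • v = 0 := by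
      rw [sub_smul, ← h1, Matrix.smul_mulVec, Matrix.one_mulVec, sub_self]
    rcases smul_eq_zero.mp h2 with h3 | h3
    · exact sub_eq_zero.mp h3
    · exact absurd h3 hv0
  -- roots of unity setup
  set Rset := Polynomial.nthRootsFinset d (1 : ℂ) with hRdef
  have h1R : (1 : ℂ) ∈ Rset := (Polynomial.mem_nthRootsFinset hd0 1).mpr (one_pow d)
  have hcard : Rset.card = d := hprim.card_nthRootsFinset
  have base := Polynomial.X_pow_sub_one_eq_prod hd0 hprim
  have hCμ : (C μ : ℂ[X]) * C μ⁻¹ = 1 := by rw [← C_mul, mul_inv_cancel₀ hμ0, C_1]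
  have hprod_id : ∏ x ∈ Rset, ((X : ℂ[X]) - C (x * μ)) = X ^ d - C (μ ^ d) := by
    have e1 := congrArg (aeval ((C μ⁻¹ : ℂ[X]) * X)) base
    simp only [map_sub, map_pow, map_prod, aeval_X, aeval_C, _root_.map_one,
      Polynomial.algebraMap_eq] at e1
    calc ∏ x ∈ Rset, ((X : ℂ[X]) - C (x * μ))
        = ∏ x ∈ Rset, (C μ * (C μ⁻¹ * X - C x)) := by
          refine Finset.prod_congr rfl (fun x hx => ?_)
          rw [mul_sub, ← mul_assoc, hCμ, one_mul, ← C_mul, mul_comm μ x]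
      _ = (∏ _x ∈ Rset, (C μ : ℂ[X])) * ∏ x ∈ Rset, (C μ⁻¹ * X - C x) :=
          Finset.prod_mul_distrib
      _ = C μ ^ d * ((C μ⁻¹ * X) ^ d - 1) := by rw [Finset.prod_const, hcard, ← e1]
      _ = X ^ d - C (μ ^ d) := by
          rw [mul_sub, mul_one, mul_pow, ← mul_assoc, ← mul_pow, hCμ, one_pow, one_mul, ← C_pow]
  -- projector
  set Sset := Rset.erase 1 with hSdef
  set κ := ∏ x ∈ Sset, ((1 - x) * μ) with hκdef
  have hκ0 : κ ≠ 0 := by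
    rw [hκdef]
    apply Finset.prod_ne_zero_iff.mpr
    intro x hx
    exact mul_ne_zero (sub_ne_zero.mpr (Ne.symm (Finset.ne_of_mem_erase hx))) hμ0
  set f : ℂ[X] := C κ⁻¹ * ∏ x ∈ Sset, (X - C (x * μ)) with hfdef
  set P := aeval A f with hPdef
  have hevalS : ∀ x ∈ Sset, eval (x * μ) f = 0 := by
    intro x hx
    rw [hfdef]
    simp only [eval_mul, eval_C, eval_prod, eval_sub, eval_X]
    rw [Finset.prod_eq_zero hx (by rw [sub_self]), mul_zero]
  have hevalone : eval μ f = 1 := by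
    rw [hfdef]
    simp only [eval_mul, eval_C, eval_prod, eval_sub, eval_X]
    have : ∏ x ∈ Sset, (μ - x * μ) = κ := by
      rw [hκdef]; exact Finset.prod_congr rfl (fun x _ => by ring)
    rw [this, inv_mul_cancel₀ hκ0]
  have hfX : ((X : ℂ[X]) - C μ) * f = C κ⁻¹ * (X ^ d - C ω) := by
    rw [hfdef, mul_left_comm]
    congr 1
    have h1 : ((X : ℂ[X]) - C μ) = X - C ((1 : ℂ) * μ) := by rw [one_mul]
    rw [h1, Finset.mul_prod_erase Rset (fun x => (X : ℂ[X]) - C (x * μ)) h1R, hprod_id, hμd]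
  have hAP : A * P = μ • P := by
    have e := congrArg (aeval A) hfX
    simp only [_root_.map_mul, map_sub, map_pow, aeval_X, aeval_C,
      Algebra.algebraMap_eq_smul_one] at e
    rw [← hPdef] at e
    rw [← hω, sub_self, mul_zero] at e
    rw [sub_mul, smul_mul_assoc, one_mul] at e
    exact sub_eq_zero.mp e
  have hPA : P * A = μ • P := by
    have hfX2 : f * ((X : ℂ[X]) - C μ) = C κ⁻¹ * (X ^ d - C ω) := by
      rw [mul_comm f _]; exact hfX
    have e := congrArg (aeval A) hfX2
    simp only [_root_.map_mul, map_sub, map_pow, aeval_X, aeval_C,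
      Algebra.algebraMap_eq_smul_one] at e
    rw [← hPdef] at e
    rw [← hω, sub_self, mul_zero] at e
    rw [mul_sub, mul_smul_comm, mul_one] at e
    exact sub_eq_zero.mp e
  have hPP : P * P = P := by
    have := aux_mul_aeval A P μ hPA f
    rw [hevalone, one_smul] at this
    rw [hPdef]
    exact this
  have hPne : P ≠ 0 := by
    intro h
    have := aux_aeval_mulVec A μ v hAv f
    rw [hevalone, one_smul, ← hPdef, h, Matrix.zero_mulVec] at this
    exact hv0 this.symm
  -- orthogonality
  have hPBP : ∀ i ∈ Finset.Ico 1 d, P * B ^ i * P = 0 := by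
    intro i hi
    rw [Finset.mem_Ico] at hi
    have hζi : (ζ : ℂ) ^ i ≠ 0 := pow_ne_zero _ hζ0
    have hBiA : B ^ i * A = (ζ ^ i)⁻¹ • (A * B ^ i) := by
      rw [hBpow i, smul_smul, inv_mul_cancel₀ hζi, one_smul]
    have hMA : (P * B ^ i) * A = ((ζ ^ i)⁻¹ * μ) • (P * B ^ i) := by
      calc P * B ^ i * A = P * ((ζ ^ i)⁻¹ • (A * B ^ i)) := by rw [mul_assoc, hBiA]
        _ = (ζ ^ i)⁻¹ • ((P * A) * B ^ i) := by rw [mul_smul_comm, ← mul_assoc]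
        _ = ((ζ ^ i)⁻¹ * μ) • (P * B ^ i) := by
              rw [hPA, smul_mul_assoc, smul_smul]
    have hres := aux_mul_aeval A (P * B ^ i) ((ζ ^ i)⁻¹ * μ) hMA f
    have hx : (ζ ^ i)⁻¹ = ζ ^ (d - i) := by
      have h1 : ζ ^ (d - i) * ζ ^ i = 1 := by
        rw [← pow_add, Nat.sub_add_cancel hi.2.le, hζd]
      exact (eq_inv_of_mul_eq_one_left h1).symm
    have hmem : ζ ^ (d - i) ∈ Sset := by
      rw [hSdef]
      refine Finset.mem_erase.mpr ⟨?_, ?_⟩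
      · exact hprim.pow_ne_one_of_pos_of_lt (by omega) (by omega)
      · exact (Polynomial.mem_nthRootsFinset hd0 1).mpr
          (by rw [← pow_mul, mul_comm, pow_mul, hζd, one_pow])
    have heval0 : eval ((ζ ^ i)⁻¹ * μ) f = 0 := by
      rw [hx]; exact hevalS _ hmem
    rw [heval0, zero_smul, ← hPdef] at hres
    exact hres
  -- the averaged element is scalar
  have hsum_scalar : ∀ S : Matrix (Fin n) (Fin n) ℂ, A * S = μ • S → S * A = μ • S →
      ∃ c : ℂ, (∑ i ∈ Finset.range d, B ^ i * S * B' ^ i) = c • 1 := by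
    intro S h1 h2
    apply comm_scalar
    · rw [Finset.sum_mul, Finset.mul_sum]
      refine Finset.sum_congr rfl (fun i _ => ?_)
      have hL : B ^ i * S * B' ^ i * A = (ζ ^ i * μ) • (B ^ i * S * B' ^ i) := by
        calc B ^ i * S * B' ^ i * A = B ^ i * S * (ζ ^ i • (A * B' ^ i)) := by
              rw [mul_assoc (B ^ i * S), hB'A i]
          _ = ζ ^ i • (B ^ i * (S * A) * B' ^ i) := by
              rw [mul_smul_comm]; congr 1; simp only [mul_assoc]
          _ = (ζ ^ i * μ) • (B ^ i * S * B' ^ i) := by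
              rw [h2, mul_smul_comm, smul_mul_assoc, smul_smul]
      have hR : A * (B ^ i * S * B' ^ i) = (ζ ^ i * μ) • (B ^ i * S * B' ^ i) := by
        calc A * (B ^ i * S * B' ^ i) = (A * B ^ i) * (S * B' ^ i) := by
              simp only [mul_assoc]
          _ = ζ ^ i • (B ^ i * (A * S) * B' ^ i) := by
              rw [hBpow i, smul_mul_assoc]; congr 1; simp only [mul_assoc]
          _ = (ζ ^ i * μ) • (B ^ i * S * B' ^ i) := by
              rw [h1, mul_smul_comm, smul_mul_assoc, smul_smul]
      rw [hL, hR]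
    · have hterm : ∀ i : ℕ, B * (B ^ i * S * B' ^ i) = (B ^ (i+1) * S * B' ^ (i+1)) * B := by
        intro i
        have hB'i : B' ^ (i+1) * B = B' ^ i := by
          rw [pow_succ, mul_assoc, show B' * B = 1 from by simpa using hB'B 1, mul_one]
        calc B * (B ^ i * S * B' ^ i) = B ^ (i+1) * S * B' ^ i := by
              rw [pow_succ']; simp only [mul_assoc]
          _ = B ^ (i+1) * S * (B' ^ (i+1) * B) := by rw [hB'i]
          _ = (B ^ (i+1) * S * B' ^ (i+1)) * B := by simp only [mul_assoc]
      have hTd : B ^ d * S * B' ^ d = S := by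
        rw [hω', hB'd]
        simp only [smul_mul_assoc, mul_smul_comm, one_mul, mul_one, smul_smul]
        rw [inv_mul_cancel₀ hω'0, one_smul]
      have hT0 : B ^ 0 * S * B' ^ 0 = S := by simp
      have hshift : ∑ i ∈ Finset.range d, B ^ (i+1) * S * B' ^ (i+1)
          = ∑ i ∈ Finset.range d, B ^ i * S * B' ^ i := by
        have h1' := Finset.sum_range_succ' (fun i => B ^ i * S * B' ^ i) d
        have h2' := Finset.sum_range_succ (fun i => B ^ i * S * B' ^ i) d
        rw [h2'] at h1'
        simp only [hTd, hT0] at h1'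
        exact (add_right_cancel h1'.symm)
      calc (∑ i ∈ Finset.range d, B ^ i * S * B' ^ i) * B
          = (∑ i ∈ Finset.range d, B ^ (i+1) * S * B' ^ (i+1)) * B := by rw [hshift]
        _ = ∑ i ∈ Finset.range d, (B ^ (i+1) * S * B' ^ (i+1)) * B := by
            rw [Finset.sum_mul]
        _ = ∑ i ∈ Finset.range d, B * (B ^ i * S * B' ^ i) :=
            Finset.sum_congr rfl (fun i _ => (hterm i).symm)
        _ = B * ∑ i ∈ Finset.range d, B ^ i * S * B' ^ i := by
            rw [Finset.mul_sum]
  -- the averaged projector equals 1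
  obtain ⟨c₀, hc₀⟩ := hsum_scalar P hAP hPA
  have hPQ : P * (∑ i ∈ Finset.range d, B ^ i * P * B' ^ i) = P := by
    rw [Finset.mul_sum]
    have hterms : ∀ i ∈ Finset.range d, P * (B ^ i * P * B' ^ i)
        = if i = 0 then P * B' ^ 0 else 0 := by
      intro i hi
      by_cases h : i = 0
      · subst h; rw [if_pos rfl, pow_zero, one_mul, ← mul_assoc, hPP]
      · rw [if_neg h]
        have hi' : i ∈ Finset.Ico 1 d :=
          Finset.mem_Ico.mpr ⟨Nat.one_le_iff_ne_zero.mpr h, Finset.mem_range.mp hi⟩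
        have h0 := hPBP i hi'
        calc P * (B ^ i * P * B' ^ i) = (P * B ^ i * P) * B' ^ i := by
              simp only [mul_assoc]
          _ = 0 := by rw [h0, zero_mul]
    rw [Finset.sum_congr rfl hterms, Finset.sum_ite_eq' (Finset.range d) 0
      (fun _ => P * B' ^ 0)]
    simp [Finset.mem_range, hd0]
  have hc1 : c₀ = 1 := by
    rw [hc₀, mul_smul_comm, mul_one] at hPQ
    have h2 : (c₀ - 1) • P = 0 := by rw [sub_smul, one_smul, hPQ, sub_self]
    rcases smul_eq_zero.mp h2 with h3 | h3
    · exact sub_eq_zero.mp h3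
    · exact absurd h3 hPne
  have hQ1 : (∑ i ∈ Finset.range d, B ^ i * P * B' ^ i) = 1 := by
    rw [hc₀, hc1, one_smul]
  -- trace computation
  set τ := Matrix.trace P with hτdef
  have htr : (d : ℂ) * τ = (n : ℂ) := by
    have h1 := congrArg Matrix.trace hQ1
    rw [Matrix.trace_sum, Matrix.trace_one, Fintype.card_fin] at h1
    have h2 : ∀ i ∈ Finset.range d, Matrix.trace (B ^ i * P * B' ^ i) = τ := by
      intro i _
      rw [Matrix.trace_mul_comm, ← mul_assoc, hB'B i, one_mul, hτdef]
    rw [Finset.sum_congr rfl h2, Finset.sum_const, Finset.card_range, nsmul_eq_mul] at h1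
    exact_mod_cast h1
  have hτm : τ = (m : ℂ) := by
    have hdC : (d : ℂ) ≠ 0 := Nat.cast_ne_zero.mpr hd0.ne'
    apply mul_left_cancel₀ hdC
    rw [htr, hm]
    push_cast
    ring
  -- every compression is scalar
  have hTP : ∀ T : Matrix (Fin n) (Fin n) ℂ, ∃ c : ℂ, P * T * P = c • P := by
    intro T
    have h1 : A * (P * T * P) = μ • (P * T * P) := by
      rw [← mul_assoc, ← mul_assoc, hAP, smul_mul_assoc, smul_mul_assoc]
    have h2 : (P * T * P) * A = μ • (P * T * P) := by
      rw [mul_assoc, mul_assoc, hPA, mul_smul_comm, mul_smul_comm, ← mul_assoc]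
    obtain ⟨c, hc⟩ := hsum_scalar (P * T * P) h1 h2
    refine ⟨c, ?_⟩
    have h3 : P * (∑ i ∈ Finset.range d, B ^ i * (P * T * P) * B' ^ i) * P = c • P := by
      rw [hc, mul_smul_comm, mul_one, smul_mul_assoc, hPP]
    have h4 : P * (∑ i ∈ Finset.range d, B ^ i * (P * T * P) * B' ^ i) * P = P * T * P := by
      rw [Finset.mul_sum, Finset.sum_mul]
      have hterms : ∀ i ∈ Finset.range d, (P * (B ^ i * (P * T * P) * B' ^ i)) * P
          = if i = 0 then P * T * P else 0 := by
        intro i hi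
        by_cases h : i = 0
        · subst h
          rw [if_pos rfl]
          calc (P * (B ^ 0 * (P * T * P) * B' ^ 0)) * P = (P * P) * T * (P * P) := by
                simp only [pow_zero, one_mul, mul_one, mul_assoc]
            _ = P * T * P := by rw [hPP]
        · rw [if_neg h]
          have hi' : i ∈ Finset.Ico 1 d :=
            Finset.mem_Ico.mpr ⟨Nat.one_le_iff_ne_zero.mpr h, Finset.mem_range.mp hi⟩
          have h0 := hPBP i hi'
          calc (P * (B ^ i * (P * T * P) * B' ^ i)) * P
              = (P * B ^ i * P) * (T * P * B' ^ i * P) := by simp only [mul_assoc]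
            _ = 0 := by rw [h0, zero_mul]
      rw [Finset.sum_congr rfl hterms, Finset.sum_ite_eq' (Finset.range d) 0
        (fun _ => P * T * P)]
      simp [Finset.mem_range, hd0]
    exact h4.symm.trans h3
  -- entrywise relation
  have hkey : ∀ i j k l : Fin n, τ * (P i k * P l j) = P l k * P i j := by
    intro i j k l
    obtain ⟨c, hc⟩ := hTP (Matrix.single k l 1)
    have hentry : ∀ i' j' : Fin n,
        ((P * Matrix.single k l 1 * P : Matrix (Fin n) (Fin n) ℂ)) i' j'
          = P i' k * P l j' := by
      intro i' j'
      rw [Matrix.mul_apply]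
      rw [Finset.sum_eq_single l]
      · rw [Matrix.mul_single_apply_same, mul_one]
      · intro s _ hs
        rw [Matrix.mul_single_apply_of_ne (hbj := hs), zero_mul]
      · intro hl; exact absurd (Finset.mem_univ l) hl
    have hent : ∀ i' j' : Fin n, P i' k * P l j' = c * P i' j' := by
      intro i' j'
      have := congrFun (congrFun hc i') j'
      rw [hentry i' j'] at this
      simpa [Matrix.smul_apply, smul_eq_mul] using this
    have hsum : P l k = c * τ := by
      have h6 : ∑ i', P l i' * P i' k = P l k := by rw [← Matrix.mul_apply, hPP]
      calc P l k = ∑ i', P l i' * P i' k := h6.symm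
        _ = ∑ i', c * P i' i' := by
            refine Finset.sum_congr rfl (fun i' _ => ?_)
            rw [mul_comm, hent i' i']
        _ = c * τ := by
            rw [← Finset.mul_sum, hτdef, Matrix.trace]
            rfl
    rw [hent i j, hsum]
    ring
  -- conclusion
  obtain ⟨i0, k0, hik⟩ : ∃ i k : Fin n, P i k ≠ 0 := by
    by_contra h
    push_neg at h
    apply hPne
    ext i j
    simpa using h i j
  have hτ1 : τ = 1 := by
    have h1 := hkey i0 k0 k0 i0
    have h2 : (τ - 1) * (P i0 k0 * P i0 k0) = 0 := by
      rw [sub_mul, h1, one_mul, sub_self]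
    rcases mul_eq_zero.mp h2 with h3 | h3
    · exact sub_eq_zero.mp h3
    · exact absurd h3 (mul_ne_zero hik hik)
  rw [hτm] at hτ1
  have hm1 : m = 1 := by exact_mod_cast hτ1
  omega
end

section
/- Let n ≥ 2 and let ζ ∈ ℂ be a primitive n-th root of unity. If (a,b) and (a',b') are pairs of elements of GL(n,ℂ) with a b a⁻¹ b⁻¹ = ζ·I and a' b' a'⁻¹ b'⁻¹ = ζ·I, then there exist g ∈ GL(n,ℂ) and scalars λ, μ ∈ ℂˣ such that g a g⁻¹ = λ·a' and g b g⁻¹ = μ·b'. -/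
open Matrix

/-- The cyclic shift matrix. -/
def shiftMat (n : ℕ) [NeZero n] : Matrix (Fin n) (Fin n) ℂ :=
  Matrix.of fun i j => if i = j + 1 then 1 else 0

/-- Canonical form: any pair with commutator `ζ·I` is conjugate, up to scalars,
to the clock-and-shift pair. -/
theorem canonical_form_aux (n : ℕ) [NeZero n] (hn : 2 ≤ n) (ζ : ℂ) (hζ : IsPrimitiveRoot ζ n)
    (a b : GL (Fin n) ℂ)
    (hab : ((a * b * a⁻¹ * b⁻¹ : GL (Fin n) ℂ) : Matrix (Fin n) (Fin n) ℂ)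
        = ζ • (1 : Matrix (Fin n) (Fin n) ℂ)) :
    ∃ (g : GL (Fin n) ℂ) (lam mu : ℂˣ),
      ((g * a * g⁻¹ : GL (Fin n) ℂ) : Matrix (Fin n) (Fin n) ℂ)
        = (lam : ℂ) • shiftMat n ∧
      ((g * b * g⁻¹ : GL (Fin n) ℂ) : Matrix (Fin n) (Fin n) ℂ)
        = (mu : ℂ) • Matrix.diagonal (fun i : Fin n => ζ⁻¹ ^ (i : ℕ)) := by
  have hζ0 : ζ ≠ 0 := hζ.ne_zero (by omega)
  set A : Matrix (Fin n) (Fin n) ℂ := (a : Matrix (Fin n) (Fin n) ℂ) with hA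
  set B : Matrix (Fin n) (Fin n) ℂ := (b : Matrix (Fin n) (Fin n) ℂ) with hB
  -- the basic commutation relation
  have h2 : A * B = ζ • (B * A) := by
    have hkey : ((a * b * a⁻¹ * b⁻¹) * b * a : GL (Fin n) ℂ) = a * b := by group
    have h := congrArg (Units.val) hkey
    rw [Units.val_mul, Units.val_mul, hab, Units.val_mul] at h
    rw [hA, hB, ← h, Matrix.smul_mul, Matrix.smul_mul, Matrix.one_mul]
  have hcomm : B * A = ζ⁻¹ • (A * B) := by
    rw [h2, smul_smul, inv_mul_cancel₀ hζ0, one_smul]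
  have hBA : ∀ k : ℕ, B * A ^ k = (ζ⁻¹) ^ k • (A ^ k * B) := by
    intro k
    induction k with
    | zero => simp
    | succ k ih =>
      calc B * A ^ (k+1) = (B * A ^ k) * A := by rw [pow_succ, Matrix.mul_assoc]
        _ = (ζ⁻¹)^k • (A ^ k * (B * A)) := by rw [ih]; simp [Matrix.smul_mul, Matrix.mul_assoc]
        _ = (ζ⁻¹)^k • (A ^ k * (ζ⁻¹ • (A * B))) := by rw [hcomm]
        _ = (ζ⁻¹)^(k+1) • (A ^ (k+1) * B) := by
            rw [Matrix.mul_smul, smul_smul, ← pow_succ, ← Matrix.mul_assoc, ← pow_succ]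

  -- eigenvector machinery
  set T : Module.End ℂ (Fin n → ℂ) := Matrix.mulVecLin B with hT
  obtain ⟨μ₀, hμ₀⟩ := Module.End.exists_eigenvalue T
  obtain ⟨v, hv⟩ := hμ₀.exists_hasEigenvector
  have hv0 : v ≠ 0 := hv.right
  have hvB : B *ᵥ v = μ₀ • v := by simpa [hT] using hv.apply_eq_smul
  have cancel : ∀ (u : GL (Fin n) ℂ) (x : Fin n → ℂ),
      ((u⁻¹ : GL (Fin n) ℂ) : Matrix (Fin n) (Fin n) ℂ) *ᵥ
        (((u : GL (Fin n) ℂ) : Matrix (Fin n) (Fin n) ℂ) *ᵥ x) = x := by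
    intro u x
    rw [Matrix.mulVec_mulVec, ← Units.val_mul, inv_mul_cancel, Units.val_one, Matrix.one_mulVec]
  have hμ₀0 : μ₀ ≠ 0 := by
    intro h0
    apply hv0
    have h := cancel b v
    rw [← hB, hvB, h0, zero_smul, Matrix.mulVec_zero] at h
    exact h.symm
  set w : ℕ → (Fin n → ℂ) := fun k => A ^ k *ᵥ v with hw
  have hw_eig : ∀ k : ℕ, B *ᵥ w k = (μ₀ * ζ⁻¹ ^ k) • w k := by
    intro k
    show B *ᵥ (A ^ k *ᵥ v) = (μ₀ * ζ⁻¹ ^ k) • (A ^ k *ᵥ v)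
    rw [Matrix.mulVec_mulVec, hBA k, Matrix.smul_mulVec, ← Matrix.mulVec_mulVec, hvB,
      Matrix.mulVec_smul, smul_smul, mul_comm]
  have hApow : ∀ k : ℕ, A ^ k = ((a ^ k : GL (Fin n) ℂ) : Matrix (Fin n) (Fin n) ℂ) :=
    fun k => (Units.val_pow_eq_pow_val a k).symm
  have hw_ne : ∀ k : ℕ, w k ≠ 0 := by
    intro k hk
    apply hv0
    have h := cancel (a ^ k) v
    rw [← hApow k] at h
    rw [show (A ^ k *ᵥ v) = w k from rfl, hk, Matrix.mulVec_zero] at h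
    exact h.symm
  have hζinv : IsPrimitiveRoot ζ⁻¹ n := hζ.inv
  set μf : Fin n → ℂ := fun i => μ₀ * ζ⁻¹ ^ (i : ℕ) with hμf
  have hinj : Function.Injective μf := by
    intro i j hij
    have h' : ζ⁻¹ ^ (i : ℕ) = ζ⁻¹ ^ (j : ℕ) := mul_left_cancel₀ hμ₀0 hij
    exact Fin.ext (hζinv.pow_inj i.isLt j.isLt h')
  have hTw : ∀ k : ℕ, T (w k) = (μ₀ * ζ⁻¹ ^ k) • w k := by
    intro k; simpa [hT] using hw_eig k
  have heigvec : ∀ i : Fin n, T.HasEigenvector (μf i) (w (i : ℕ)) := fun i =>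
    ⟨Module.End.mem_eigenspace_iff.mpr (hTw i), hw_ne i⟩
  have hcard : Fintype.card (Fin n) = Module.finrank ℂ (Fin n → ℂ) := by simp
  have hli := Module.End.eigenvectors_linearIndependent' T μf hinj _ heigvec
  set c₀ : Module.Basis (Fin n) ℂ (Fin n → ℂ) := basisOfLinearIndependentOfCardEqFinrank hli hcard
    with hc₀
  have hc₀w : ∀ i : Fin n, c₀ i = w (i : ℕ) := by
    intro i
    rw [hc₀, coe_basisOfLinearIndependentOfCardEqFinrank]
  have hζn : ζ⁻¹ ^ n = 1 := by rw [inv_pow, hζ.pow_eq_one, inv_one]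
  have hwn : T (w n) = μ₀ • w n := by rw [hTw n, hζn, mul_one]
  set r : Fin n → ℂ := fun i => c₀.repr (w n) i with hr
  have expand : ∀ s : Fin n → ℂ, T (∑ j, s j • c₀ j) = ∑ j, (s j * μf j) • c₀ j := by
    intro s
    rw [map_sum]
    refine Finset.sum_congr rfl fun j _ => ?_
    rw [_root_.map_smul]
    have hj : T (c₀ j) = μf j • c₀ j := by rw [hc₀w j]; exact hTw j
    rw [hj, smul_smul]
  have hsumr : ∑ j, r j • c₀ j = w n := by
    rw [hr]; exact c₀.sum_repr (w n)
  have hcoef : ∀ j : Fin n, r j * μf j - μ₀ * r j = 0 := by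
    have hsum : ∑ j, (r j * μf j - μ₀ * r j) • c₀ j = 0 := by
      have e1 : ∑ j, (r j * μf j) • c₀ j = μ₀ • w n := by
        rw [← expand r, hsumr, hwn]
      have e2 : ∑ j, (μ₀ * r j) • c₀ j = μ₀ • w n := by
        rw [← hsumr, Finset.smul_sum]
        refine Finset.sum_congr rfl fun j _ => ?_
        rw [smul_smul]
      calc ∑ j, (r j * μf j - μ₀ * r j) • c₀ j
          = ∑ j, ((r j * μf j) • c₀ j - (μ₀ * r j) • c₀ j) := by
            refine Finset.sum_congr rfl fun j _ => ?_; rw [sub_smul]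
        _ = (∑ j, (r j * μf j) • c₀ j) - ∑ j, (μ₀ * r j) • c₀ j := Finset.sum_sub_distrib _ _
        _ = 0 := by rw [e1, e2, sub_self]
    exact fun j => Fintype.linearIndependent_iff.mp c₀.linearIndependent _ hsum j
  have hrzero : ∀ i : Fin n, i ≠ 0 → r i = 0 := by
    intro i hi
    have h := hcoef i
    have hne : μf i ≠ μ₀ := by
      intro h'
      apply hi
      apply hinj
      rw [h', hμf]
      simp
    have : r i * (μf i - μ₀) = 0 := by ring_nf; ring_nf at h; linear_combination h
    rcases mul_eq_zero.mp this with h' | h'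
    · exact h'
    · exact absurd (sub_eq_zero.mp h') hne
  have hw0 : w 0 = v := by rw [hw]; simp
  have hwn_eq : w n = r 0 • v := by
    rw [← hsumr, Finset.sum_eq_single 0]
    · rw [hc₀w 0]; simp [hw0]
    · intro j _ hj; rw [hrzero j hj, zero_smul]
    · intro h; exact absurd (Finset.mem_univ 0) h
  have hc0 : r 0 ≠ 0 := by
    intro h
    exact hw_ne n (by rw [hwn_eq, h, zero_smul])
  obtain ⟨d, hd⟩ := IsAlgClosed.exists_pow_nat_eq (r 0) (show 0 < n by omega)
  have hd0 : d ≠ 0 := by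
    rintro rfl
    exact hc0 (by rw [← hd, zero_pow (by omega : n ≠ 0)])
  set e : Fin n → (Fin n → ℂ) := fun i => (d⁻¹) ^ (i : ℕ) • w (i : ℕ) with he
  have h1v : ((1 : Fin n) : ℕ) = 1 := by
    rw [Fin.val_one']; exact Nat.mod_eq_of_lt (by omega)
  have hAw : ∀ k : ℕ, A *ᵥ w k = w (k + 1) := by
    intro k
    show A *ᵥ (A ^ k *ᵥ v) = A ^ (k + 1) *ᵥ v
    rw [Matrix.mulVec_mulVec, ← pow_succ']
  have hstep : ∀ i : Fin n, A *ᵥ e i = d • e (i + 1) := by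
    intro i
    have hvala : ((i + 1 : Fin n) : ℕ) = (i.val + 1) % n := by
      rw [Fin.val_add, h1v]
    rw [he]
    simp only
    rw [Matrix.mulVec_smul, hAw]
    have hpow : ∀ m : ℕ, d⁻¹ ^ m * d ^ (m + 1) = d := by
      intro m
      rw [pow_succ, inv_pow, ← mul_assoc, inv_mul_cancel₀ (pow_ne_zero _ hd0), one_mul]
    rcases eq_or_lt_of_le (Nat.succ_le_of_lt i.isLt) with hlast | hlt
    · have hlast' : (i : ℕ) + 1 = n := hlast
      have hzero : ((i + 1 : Fin n) : ℕ) = 0 := by rw [hvala, hlast', Nat.mod_self]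
      rw [hzero, hlast', hwn_eq, hw0, smul_smul, smul_smul]
      congr 1
      rw [pow_zero, mul_one, ← hd]
      generalize hk : (i : ℕ) = k at hlast' ⊢
      rw [← hlast']
      exact hpow k
    · have hval : ((i + 1 : Fin n) : ℕ) = i.val + 1 := by
        rw [hvala]; exact Nat.mod_eq_of_lt hlt
      rw [hval, smul_smul]
      congr 1
      have := hpow ((i : ℕ))
      field_simp [pow_succ] at this ⊢
      rw [pow_succ, one_div, mul_comm d, mul_assoc, inv_mul_cancel₀ hd0, mul_one]
  have he_eig : ∀ i : Fin n, B *ᵥ e i = μf i • e i := by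
    intro i
    rw [he]
    simp only
    rw [Matrix.mulVec_smul, hw_eig, smul_smul, smul_smul, mul_comm]
  have he_ne : ∀ i : Fin n, e i ≠ 0 := fun i =>
    smul_ne_zero (pow_ne_zero _ (inv_ne_zero hd0)) (hw_ne _)
  have heigvec' : ∀ i : Fin n, T.HasEigenvector (μf i) (e i) := fun i =>
    ⟨Module.End.mem_eigenspace_iff.mpr (by simpa [hT] using he_eig i), he_ne i⟩
  have hli2 := Module.End.eigenvectors_linearIndependent' T μf hinj _ heigvec'
  set cb : Module.Basis (Fin n) ℂ (Fin n → ℂ) := basisOfLinearIndependentOfCardEqFinrank hli2 hcard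
    with hcb
  have hcbe : ∀ i : Fin n, cb i = e i := by
    intro i; rw [hcb, coe_basisOfLinearIndependentOfCardEqFinrank]
  set M : Matrix (Fin n) (Fin n) ℂ := (Pi.basisFun ℂ (Fin n)).toMatrix ⇑cb with hM
  letI : Invertible M := (Pi.basisFun ℂ (Fin n)).invertibleToMatrix cb
  have hMe : ∀ i j, M i j = e j i := by
    intro i j
    rw [hM, Module.Basis.toMatrix_apply, hcbe, Pi.basisFun_repr]
  have hAM : A * M = M * ((d : ℂ) • shiftMat n) := by
    ext i j
    have lhs : (A * M) i j = (A *ᵥ e j) i := by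
      simp only [Matrix.mul_apply, Matrix.mulVec, dotProduct]
      refine Finset.sum_congr rfl fun k _ => ?_
      rw [hMe]
    have rhs : (M * ((d : ℂ) • shiftMat n)) i j = d * e (j + 1) i := by
      simp only [Matrix.mul_apply, Matrix.smul_apply, shiftMat, Matrix.of_apply, smul_eq_mul,
        mul_ite, mul_one, mul_zero]
      rw [Finset.sum_ite_eq' Finset.univ (j + 1) (fun k => M i k * d)]
      simp [hMe, mul_comm]
    rw [lhs, rhs, hstep j]
    simp
  have hBM : B * M = M * ((μ₀ : ℂ) • Matrix.diagonal (fun i : Fin n => ζ⁻¹ ^ (i : ℕ))) := by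
    ext i j
    have lhs : (B * M) i j = (B *ᵥ e j) i := by
      simp only [Matrix.mul_apply, Matrix.mulVec, dotProduct]
      refine Finset.sum_congr rfl fun k _ => ?_
      rw [hMe]
    have rhs : (M * ((μ₀ : ℂ) • Matrix.diagonal (fun i : Fin n => ζ⁻¹ ^ (i : ℕ)))) i j
        = μ₀ * (ζ⁻¹ ^ (j : ℕ) * e j i) := by
      rw [Matrix.mul_smul, Matrix.smul_apply, Matrix.mul_diagonal, hMe]
      ring_nf
    rw [lhs, rhs, he_eig j]
    simp [hμf]
    ring
  refine ⟨(unitOfInvertible M)⁻¹, Units.mk0 d hd0, Units.mk0 μ₀ hμ₀0, ?_, ?_⟩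
  · have hval : (((unitOfInvertible M)⁻¹ * a * ((unitOfInvertible M)⁻¹)⁻¹ : GL (Fin n) ℂ) :
        Matrix (Fin n) (Fin n) ℂ) = ⅟M * A * M := by
      rw [Units.val_mul, Units.val_mul, inv_inv]
      rfl
    rw [hval, Matrix.mul_assoc, hAM, ← Matrix.mul_assoc, invOf_mul_self, Matrix.one_mul]
    rfl
  · have hval : (((unitOfInvertible M)⁻¹ * b * ((unitOfInvertible M)⁻¹)⁻¹ : GL (Fin n) ℂ) :
        Matrix (Fin n) (Fin n) ℂ) = ⅟M * B * M := by
      rw [Units.val_mul, Units.val_mul, inv_inv]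
      rfl
    rw [hval, Matrix.mul_assoc, hBM, ← Matrix.mul_assoc, invOf_mul_self, Matrix.one_mul]
    rfl


private lemma conj_helper {n : ℕ} (g g' x x' : GL (Fin n) ℂ) (c c' : ℂˣ)
    (S : Matrix (Fin n) (Fin n) ℂ)
    (h : ((g * x * g⁻¹ : GL (Fin n) ℂ) : Matrix (Fin n) (Fin n) ℂ) = (c : ℂ) • S)
    (h' : ((g' * x' * g'⁻¹ : GL (Fin n) ℂ) : Matrix (Fin n) (Fin n) ℂ) = (c' : ℂ) • S) :
    ((g'⁻¹ * g * x * (g'⁻¹ * g)⁻¹ : GL (Fin n) ℂ) : Matrix (Fin n) (Fin n) ℂ)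
      = ((c * c'⁻¹ : ℂˣ) : ℂ) • (x' : Matrix (Fin n) (Fin n) ℂ) := by
  have key : g'⁻¹ * g * x * (g'⁻¹ * g)⁻¹ = g'⁻¹ * (g * x * g⁻¹) * g' := by
    rw [_root_.mul_inv_rev]; group
  have hS : S = ((c' : ℂ))⁻¹ • ((g' * x' * g'⁻¹ : GL (Fin n) ℂ) : Matrix (Fin n) (Fin n) ℂ) := by
    rw [h', smul_smul, inv_mul_cancel₀ c'.ne_zero, one_smul]
  have key' : (x' : Matrix (Fin n) (Fin n) ℂ)
      = ((g'⁻¹ : GL (Fin n) ℂ) : Matrix (Fin n) (Fin n) ℂ) *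
        ((g' * x' * g'⁻¹ : GL (Fin n) ℂ) : Matrix (Fin n) (Fin n) ℂ) *
        ((g' : GL (Fin n) ℂ) : Matrix (Fin n) (Fin n) ℂ) := by
    have hx : g'⁻¹ * (g' * x' * g'⁻¹) * g' = x' := by group
    conv_lhs => rw [← hx]
    rw [Units.val_mul, Units.val_mul]
  rw [key, Units.val_mul, Units.val_mul, h, hS, key']
  rw [smul_smul, Matrix.mul_smul, Matrix.smul_mul]
  congr 1
  push_cast
  ring

/-- For `n ≥ 2` and `ζ` a primitive `n`-th root of unity, any two pairs in `GL(n,ℂ)`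
with commutator `ζ·I` are conjugate up to scalar factors. -/
theorem pairs_with_commutator_primitive_root_projectively_conjugate_GL
    (n : ℕ) (hn : 2 ≤ n) (ζ : ℂ) (hζ : IsPrimitiveRoot ζ n)
    (a b a' b' : GL (Fin n) ℂ)
    (hab : ((a * b * a⁻¹ * b⁻¹ : GL (Fin n) ℂ) : Matrix (Fin n) (Fin n) ℂ)
        = ζ • (1 : Matrix (Fin n) (Fin n) ℂ))
    (hab' : ((a' * b' * a'⁻¹ * b'⁻¹ : GL (Fin n) ℂ) : Matrix (Fin n) (Fin n) ℂ)
        = ζ • (1 : Matrix (Fin n) (Fin n) ℂ)) :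
    ∃ (g : GL (Fin n) ℂ) (lam mu : ℂˣ),
      ((g * a * g⁻¹ : GL (Fin n) ℂ) : Matrix (Fin n) (Fin n) ℂ)
        = (lam : ℂ) • (a' : Matrix (Fin n) (Fin n) ℂ) ∧
      ((g * b * g⁻¹ : GL (Fin n) ℂ) : Matrix (Fin n) (Fin n) ℂ)
        = (mu : ℂ) • (b' : Matrix (Fin n) (Fin n) ℂ) := by
  haveI : NeZero n := ⟨by omega⟩
  obtain ⟨g, lam, mu, h1, h2⟩ := canonical_form_aux n hn ζ hζ a b hab
  obtain ⟨g', lam', mu', h1', h2'⟩ := canonical_form_aux n hn ζ hζ a' b' hab'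
  exact ⟨g'⁻¹ * g, lam * lam'⁻¹, mu * mu'⁻¹,
    conj_helper g g' a a' lam lam' _ h1 h1',
    conj_helper g g' b b' mu mu' _ h2 h2'⟩
end

section
/- Let ζ ∈ ℂ be a root of unity of exact order m, let n = h·m, and let a, b ∈ U(n) satisfy a b a⁻¹ b⁻¹ = ζ·I_n. Then there exist u ∈ U(n), diagonal unitary matrices d₁, d₂ ∈ U(h), and matrices P, Q ∈ U(m) with P Q P⁻¹ Q⁻¹ = ζ·I_m whose common centralizer in U(m) consists exactly of the unitary scalar matrices, such that u a u⁻¹ = d₁ ⊗ P and u b u⁻¹ = d₂ ⊗ Q, where ⊗ denotes the Kronecker product of matrices. -/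
open Module
open scoped ComplexInnerProductSpace

namespace BFM

lemma real_pow_eq_one {x : ℝ} {k : ℕ} (hx : 0 ≤ x) (hxk : x ^ k = 1) (hk : 0 < k) : x = 1 := by
  rcases lt_trichotomy x 1 with hlt | heq | hgt
  · have := pow_lt_one₀ hx hlt hk.ne'
    rw [hxk] at this; exact absurd this (lt_irrefl _)
  · exact heq
  · have := one_lt_pow₀ hgt hk.ne'
    rw [hxk] at this; exact absurd this (lt_irrefl _)

lemma norm_eq_one_of_pow {z : ℂ} {k : ℕ} (hz : z ^ k = 1) (hk : 0 < k) : ‖z‖ = 1 := by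
  have : ‖z‖ ^ k = 1 := by rw [← norm_pow, hz, norm_one]
  exact real_pow_eq_one (norm_nonneg z) this hk

variable {V : Type} [NormedAddCommGroup V] [InnerProductSpace ℂ V]

lemma norm_map_of_inner (T : V →ₗ[ℂ] V) (hT : ∀ x y : V, ⟪T x, T y⟫ = ⟪x, y⟫) (x : V) :
    ‖T x‖ = ‖x‖ := by
  have h := hT x x
  rw [inner_self_eq_norm_sq_to_K, inner_self_eq_norm_sq_to_K] at h
  have h2 : (‖T x‖ : ℝ) ^ 2 = ‖x‖ ^ 2 := by exact_mod_cast h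
  nlinarith [norm_nonneg (T x), norm_nonneg x]

lemma inj_of_inner (T : V →ₗ[ℂ] V) (hT : ∀ x y : V, ⟪T x, T y⟫ = ⟪x, y⟫) :
    Function.Injective T := by
  intro x y hxy
  have := norm_map_of_inner T hT (x - y)
  rw [map_sub, hxy, sub_self, norm_zero] at this
  exact sub_eq_zero.mp (norm_eq_zero.mp this.symm)

lemma inner_eq_zero_of_eig (T : V →ₗ[ℂ] V) (hT : ∀ x y : V, ⟪T x, T y⟫ = ⟪x, y⟫)
    {x y : V} {α γ : ℂ} (hx : T x = α • x) (hy : T y = γ • y)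
    (hα : ‖α‖ = 1) (hne : α ≠ γ) : ⟪x, y⟫ = 0 := by
  have h := hT x y
  rw [hx, hy, inner_smul_left, inner_smul_right] at h
  have hαα : (starRingEnd ℂ) α * α = 1 := by
    rw [mul_comm, Complex.mul_conj]
    norm_cast
    rw [Complex.normSq_eq_norm_sq, hα]; norm_num
  have hne' : (starRingEnd ℂ) α * γ ≠ 1 := by
    intro hcon
    apply hne
    have : (starRingEnd ℂ) α * γ = (starRingEnd ℂ) α * α := by rw [hcon, hαα]
    have hα0 : (starRingEnd ℂ) α ≠ 0 := by
      simp only [ne_eq, map_eq_zero]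
      intro h0; rw [h0, norm_zero] at hα; norm_num at hα
    exact (mul_left_cancel₀ hα0 this).symm
  have : ((starRingEnd ℂ) α * γ - 1) * ⟪x, y⟫ = 0 := by ring_nf; linear_combination h
  rcases mul_eq_zero.mp this with h1 | h2
  · exact absurd (by linear_combination h1) hne'
  · exact h2

end BFM

namespace BFM2
open BFM Submodule

lemma keyLemma (m : ℕ) [NeZero m] (ζ : ℂ) (hζ : IsPrimitiveRoot ζ m) (h : ℕ) :
    ∀ (V : Type) [NormedAddCommGroup V] [InnerProductSpace ℂ V] [FiniteDimensional ℂ V]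
      (T S : V →ₗ[ℂ] V),
      finrank ℂ V = h * m →
      (∀ x y : V, ⟪T x, T y⟫ = ⟪x, y⟫) →
      (∀ x y : V, ⟪S x, S y⟫ = ⟪x, y⟫) →
      (∀ x : V, T (S x) = ζ • S (T x)) →
      ∃ (e : Fin h × Fin m → V) (μ β : Fin h → ℂ),
        (∀ p q, ⟪e p, e q⟫ = if p = q then 1 else 0) ∧
        (∀ i, ‖μ i‖ = 1) ∧ (∀ i, ‖β i‖ = 1) ∧
        (∀ i j, T (e (i, j)) = (μ i * ζ ^ (j : ℕ)) • e (i, j)) ∧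
        (∀ i j, S (e (i, j)) = β i • e (i, j + 1)) := by
  have hm : 0 < m := Nat.pos_of_ne_zero (NeZero.ne m)
  have hζm : ζ ^ m = 1 := hζ.pow_eq_one
  have hζnorm : ‖ζ‖ = 1 := norm_eq_one_of_pow hζm hm
  induction h with
  | zero =>
    intro V _ _ _ T S _ _ _ _
    exact ⟨fun p => p.1.elim0, Fin.elim0, Fin.elim0, fun p => p.1.elim0, fun i => i.elim0,
      fun i => i.elim0, fun i => i.elim0, fun i => i.elim0⟩
  | succ h ih =>
    intro V _ _ _ T S hdim hT hS hTS
    haveI : Nontrivial V := by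
      apply Module.nontrivial_of_finrank_pos (R := ℂ)
      rw [hdim]; positivity
    -- iterated commutation
    have hTSk : ∀ (k : ℕ) (x : V), T ((S ^ k) x) = ζ ^ k • (S ^ k) (T x) := by
      intro k
      induction k with
      | zero => intro x; simp
      | succ k ihk =>
        intro x
        have h1 : (S ^ (k + 1)) x = (S ^ k) (S x) := by
          rw [pow_succ]; rfl
        have h2 : ∀ y : V, (S ^ (k + 1)) y = (S ^ k) (S y) := by
          intro y; rw [pow_succ]; rfl
        rw [h1, ihk (S x), hTS x, map_smul, h2 (T x), smul_smul, pow_succ]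
    have hSknorm : ∀ (k : ℕ) (x : V), ‖(S ^ k) x‖ = ‖x‖ := by
      intro k
      induction k with
      | zero => intro x; simp
      | succ k ihk =>
        intro x
        have h2 : (S ^ (k + 1)) x = (S ^ k) (S x) := by rw [pow_succ]; rfl
        rw [h2, ihk, norm_map_of_inner S hS]
    -- eigenvector of T
    obtain ⟨μ₀, hμ₀⟩ := Module.End.exists_eigenvalue (T : Module.End ℂ V)
    set E := Module.End.eigenspace (T : Module.End ℂ V) μ₀ with hE
    have hSmE : ∀ x ∈ E, (S ^ m) x ∈ E := by
      intro x hx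
      rw [hE, Module.End.mem_eigenspace_iff] at hx ⊢
      show T ((S ^ m) x) = μ₀ • (S ^ m) x
      rw [hTSk m x, hx, map_smul, hζm, one_smul]
    haveI : Nontrivial E := Submodule.nontrivial_iff_ne_bot.mpr hμ₀
    obtain ⟨ν, hν⟩ := Module.End.exists_eigenvalue ((S ^ m).restrict hSmE)
    obtain ⟨v', hv'⟩ := hν.exists_hasEigenvector
    have hv'0 : (v' : V) ≠ 0 := by
      simpa using hv'.right
    have hTv' : T (v' : V) = μ₀ • (v' : V) := Module.End.mem_eigenspace_iff.mp v'.2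
    have hSmv' : (S ^ m) (v' : V) = ν • (v' : V) := by
      have := hv'.apply_eq_smul
      have h2 := congrArg (Subtype.val : E → V) this
      rwa [LinearMap.restrict_coe_apply] at h2
    -- normalize
    set v : V := (‖(v' : V)‖ : ℂ)⁻¹ • (v' : V) with hv
    have hvnorm : ‖v‖ = 1 := by
      rw [hv, norm_smul]
      simp [norm_ne_zero_iff.mpr hv'0]
    have hv0 : v ≠ 0 := by
      intro h0; rw [h0, norm_zero] at hvnorm; norm_num at hvnorm
    have hTv : T v = μ₀ • v := by
      rw [hv, map_smul, hTv', smul_comm]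
    have hSmv : (S ^ m) v = ν • v := by
      rw [hv, map_smul, hSmv', smul_comm]
    have hμnorm : ‖μ₀‖ = 1 := by
      have := norm_map_of_inner T hT v
      rw [hTv, norm_smul, hvnorm, mul_one] at this
      exact this
    have hνnorm : ‖ν‖ = 1 := by
      have := hSknorm m v
      rw [hSmv, norm_smul, hvnorm, mul_one] at this
      exact this
    obtain ⟨β₀, hβ₀⟩ := IsAlgClosed.exists_pow_nat_eq ν hm
    have hβnorm : ‖β₀‖ = 1 := by
      apply real_pow_eq_one (norm_nonneg β₀) _ hm
      rw [← norm_pow, hβ₀, hνnorm]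
    have hβ0 : β₀ ≠ 0 := by
      intro h0; rw [h0, norm_zero] at hβnorm; norm_num at hβnorm
    -- the cyclic family
    set f : Fin m → V := fun j => (β₀⁻¹) ^ (j : ℕ) • (S ^ (j : ℕ)) v with hf
    have hfnorm : ∀ j, ‖f j‖ = 1 := by
      intro j
      rw [hf]
      simp only [norm_smul, norm_pow, norm_inv, hβnorm, hSknorm, hvnorm]
      norm_num
    have hTf : ∀ j : Fin m, T (f j) = (μ₀ * ζ ^ (j : ℕ)) • f j := by
      intro j
      rw [hf]
      simp only [map_smul, hTSk, hTv, map_smul, smul_smul]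
      ring_nf
    have hSf : ∀ j : Fin m, S (f j) = β₀ • f (j + 1) := by
      intro j
      have hstep : S (f j) = (β₀⁻¹) ^ (j : ℕ) • (S ^ ((j : ℕ) + 1)) v := by
        rw [hf]
        simp only [map_smul]
        congr 1
        rw [pow_succ']
        rfl
      by_cases hj : (j : ℕ) + 1 < m
      · have hm2 : 1 < m := by omega
        have hval : ((j + 1 : Fin m) : ℕ) = (j : ℕ) + 1 := by
          rw [Fin.val_add, Fin.val_one', Nat.mod_eq_of_lt hm2, Nat.mod_eq_of_lt hj]
        rw [hstep, hf]
        simp only [hval, smul_smul]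
        congr 1
        rw [pow_succ]
        field_simp
      · have hjm : (j : ℕ) + 1 = m := by have := j.2; omega
        have hval0 : ((j + 1 : Fin m) : ℕ) = 0 := by
          rw [Fin.val_add, Fin.val_one', Nat.add_mod_mod, hjm, Nat.mod_self]
        have hfj1 : f (j + 1) = v := by
          rw [hf]
          simp only [hval0, pow_zero, one_smul, Module.End.one_apply]
        rw [hstep, hjm, hSmv, hfj1, ← hβ₀, smul_smul]
        congr 1
        rw [show β₀ ^ m = β₀ ^ ((j : ℕ) + 1) from by rw [hjm], pow_succ, inv_pow,
          inv_mul_cancel_left₀ (pow_ne_zero _ hβ0)]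
    have hfon : ∀ j k : Fin m, ⟪f j, f k⟫ = if j = k then 1 else 0 := by
      intro j k
      by_cases hjk : j = k
      · subst hjk
        simp [inner_self_eq_norm_sq_to_K, hfnorm j]
      · rw [if_neg hjk]
        apply inner_eq_zero_of_eig T hT (hTf j) (hTf k)
        · rw [norm_mul, hμnorm, norm_pow, hζnorm]; norm_num
        · intro hcon
          apply hjk
          have hμ0 : μ₀ ≠ 0 := by intro h0; rw [h0, norm_zero] at hμnorm; norm_num at hμnorm
          have : ζ ^ (j : ℕ) = ζ ^ (k : ℕ) := mul_left_cancel₀ hμ0 hcon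
          exact Fin.ext (hζ.pow_inj j.2 k.2 this)
    -- the span W and its orthogonal complement
    set W : Submodule ℂ V := Submodule.span ℂ (Set.range f) with hWdef
    have hfW : ∀ j, f j ∈ W := fun j => Submodule.subset_span (Set.mem_range_self j)
    have hmapT : Submodule.map T W ≤ W := by
      rw [hWdef, Submodule.map_span, Submodule.span_le]
      rintro y ⟨x, ⟨j, rfl⟩, rfl⟩
      rw [hTf j]
      exact W.smul_mem _ (hfW j)
    have hmapS : Submodule.map S W ≤ W := by
      rw [hWdef, Submodule.map_span, Submodule.span_le]
      rintro y ⟨x, ⟨j, rfl⟩, rfl⟩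
      rw [hSf j]
      exact W.smul_mem _ (hfW (j + 1))
    have horth : Orthonormal ℂ f := orthonormal_iff_ite.mpr hfon
    have hWrank : finrank ℂ W = m := by
      rw [hWdef, finrank_span_eq_card horth.linearIndependent, Fintype.card_fin]
    have hTinj := inj_of_inner T hT
    have hSinj := inj_of_inner S hS
    have hmapT_eq : Submodule.map T W = W := by
      apply Submodule.eq_of_le_of_finrank_le hmapT
      exact le_of_eq (LinearEquiv.finrank_map_eq (LinearEquiv.ofInjectiveEndo T hTinj) W).symm
    have hmapS_eq : Submodule.map S W = W := by
      apply Submodule.eq_of_le_of_finrank_le hmapS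
      exact le_of_eq (LinearEquiv.finrank_map_eq (LinearEquiv.ofInjectiveEndo S hSinj) W).symm
    have hTperp : ∀ x ∈ Wᗮ, T x ∈ Wᗮ := by
      intro x hx
      rw [Submodule.mem_orthogonal] at hx ⊢
      intro u hu
      rw [← hmapT_eq] at hu
      obtain ⟨u₀, hu₀, rfl⟩ := hu
      rw [hT]
      exact hx u₀ hu₀
    have hSperp : ∀ x ∈ Wᗮ, S x ∈ Wᗮ := by
      intro x hx
      rw [Submodule.mem_orthogonal] at hx ⊢
      intro u hu
      rw [← hmapS_eq] at hu
      obtain ⟨u₀, hu₀, rfl⟩ := hu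
      rw [hS]
      exact hx u₀ hu₀
    have hrank' : finrank ℂ ↥Wᗮ = h * m := by
      have hsum := Submodule.finrank_add_finrank_orthogonal (K := W)
      rw [hWrank, hdim] at hsum
      have h4 : (h + 1) * m = h * m + m := by ring
      omega
    set T' : ↥Wᗮ →ₗ[ℂ] ↥Wᗮ := T.restrict hTperp with hT'def
    set S' : ↥Wᗮ →ₗ[ℂ] ↥Wᗮ := S.restrict hSperp with hS'def
    have hT' : ∀ x y : ↥Wᗮ, ⟪T' x, T' y⟫ = ⟪x, y⟫ := by
      intro x y
      rw [Submodule.coe_inner, Submodule.coe_inner, hT'def,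
        LinearMap.restrict_coe_apply, LinearMap.restrict_coe_apply]
      exact hT _ _
    have hS' : ∀ x y : ↥Wᗮ, ⟪S' x, S' y⟫ = ⟪x, y⟫ := by
      intro x y
      rw [Submodule.coe_inner, Submodule.coe_inner, hS'def,
        LinearMap.restrict_coe_apply, LinearMap.restrict_coe_apply]
      exact hS _ _
    have hTS' : ∀ x : ↥Wᗮ, T' (S' x) = ζ • S' (T' x) := by
      intro x
      apply Subtype.ext
      rw [hT'def, hS'def]
      simp only [LinearMap.restrict_coe_apply, SetLike.val_smul]
      exact hTS _
    obtain ⟨e', μ', β', he'on, hμ', hβ', hTe', hSe'⟩ := ih ↥Wᗮ T' S' hrank' hT' hS' hTS'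
    -- assemble
    set e : Fin (h + 1) × Fin m → V :=
      fun p => Fin.cons (α := fun _ => Fin m → V) f (fun i j => (e' (i, j) : V)) p.1 p.2 with hedef
    have he0 : ∀ j, e (0, j) = f j := by
      intro j; rw [hedef]; simp
    have heS : ∀ i j, e (i.succ, j) = (e' (i, j) : V) := by
      intro i j; rw [hedef]; simp
    have hmix : ∀ (j : Fin m) (q : Fin h × Fin m), ⟪f j, (e' q : V)⟫ = 0 := by
      intro j q
      exact (Submodule.mem_orthogonal W ((e' q : V))).mp (e' q).2 (f j) (hfW j)
    refine ⟨e, Fin.cons μ₀ μ', Fin.cons β₀ β', ?_, ?_, ?_, ?_, ?_⟩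
    · rintro ⟨i, j⟩ ⟨k, l⟩
      induction i using Fin.cases with
      | zero =>
        induction k using Fin.cases with
        | zero =>
          rw [he0, he0, hfon j l]
          by_cases hjl : j = l <;> simp [hjl, Prod.ext_iff]
        | succ k =>
          rw [he0, heS, hmix]
          simp [Prod.ext_iff, (Fin.succ_ne_zero k).symm]
      | succ i =>
        induction k using Fin.cases with
        | zero =>
          rw [heS, he0, inner_eq_zero_symm.mp (hmix l (i, j))]
          simp [Prod.ext_iff, Fin.succ_ne_zero i]
        | succ k =>
          rw [heS, heS, ← Submodule.coe_inner, he'on (i, j) (k, l)]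
          by_cases hik : (i, j) = ((k : Fin h), l)
          · simp [Prod.ext_iff] at hik
            simp [hik, Prod.ext_iff]
          · simp only [Prod.ext_iff] at hik
            have : ¬(i.succ = k.succ ∧ j = l) := by
              rw [Fin.succ_inj]; exact hik
            simp [Prod.ext_iff, hik, this]
    · intro i
      induction i using Fin.cases with
      | zero => simpa using hμnorm
      | succ i => simpa using hμ' i
    · intro i
      induction i using Fin.cases with
      | zero => simpa using hβnorm
      | succ i => simpa using hβ' i
    · intro i j
      induction i using Fin.cases with
      | zero =>
        rw [he0]
        simpa using hTf j
      | succ i =>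
        rw [heS]
        have h5 := congrArg (Subtype.val) (hTe' i j)
        rw [hT'def, LinearMap.restrict_coe_apply, SetLike.val_smul] at h5
        simpa [heS] using h5
    · intro i j
      induction i using Fin.cases with
      | zero =>
        rw [he0, he0]
        simpa using hSf j
      | succ i =>
        rw [heS, heS]
        have h5 := congrArg (Subtype.val) (hSe' i j)
        rw [hS'def, LinearMap.restrict_coe_apply, SetLike.val_smul] at h5
        simpa [heS] using h5


end BFM2

namespace BFM2b
variable {m : ℕ} [NeZero m] {ζ : ℂ}

/-- clock matrix -/
def P0 (m : ℕ) (ζ : ℂ) : Matrix (Fin m) (Fin m) ℂ := Matrix.diagonal fun j : Fin m => ζ ^ (j : ℕ)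

/-- shift matrix -/
def Q0 (m : ℕ) [NeZero m] : Matrix (Fin m) (Fin m) ℂ :=
  Matrix.of fun j k : Fin m => if j = k + 1 then (1 : ℂ) else 0

lemma pow_mod (hζm : ζ ^ m = 1) (x : ℕ) : ζ ^ (x % m) = ζ ^ x := by
  conv_rhs => rw [← Nat.mod_add_div x m]
  rw [pow_add, pow_mul, hζm, one_pow, mul_one]

lemma diag_mem {n : Type*} [Fintype n] [DecidableEq n] (v : n → ℂ) (hv : ∀ i, ‖v i‖ = 1) :
    Matrix.diagonal v ∈ Matrix.unitaryGroup n ℂ := by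
  rw [Matrix.mem_unitaryGroup_iff, Matrix.star_eq_conjTranspose, Matrix.diagonal_conjTranspose,
    Matrix.diagonal_mul_diagonal, ← Matrix.diagonal_one]
  have h1 : ∀ i, v i * star (v i) = 1 := by
    intro i
    have : v i * (starRingEnd ℂ) (v i) = 1 := by
      rw [Complex.mul_conj]
      norm_cast
      rw [Complex.normSq_eq_norm_sq, hv i]; norm_num
    simpa using this
  simp only [Pi.star_apply]
  have hfun : (fun i => v i * star (v i)) = fun _ => (1 : ℂ) := funext h1
  rw [hfun]

lemma Q0_mem : Q0 m ∈ Matrix.unitaryGroup (Fin m) ℂ := by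
  rw [Matrix.mem_unitaryGroup_iff]
  ext j k
  simp only [Matrix.mul_apply, Matrix.star_apply, Q0, Matrix.of_apply, apply_ite (star : ℂ → ℂ),
    star_one, star_zero, ite_mul, one_mul, zero_mul]
  have hterm : ∀ l : Fin m, (if j = l + 1 then (if k = l + 1 then (1 : ℂ) else 0) else 0)
      = if l = j - 1 then (if k = l + 1 then (1 : ℂ) else 0) else 0 := by
    intro l
    congr 1
    refine propext ⟨fun hh => by rw [hh]; simp, fun hh => by rw [hh]; simp⟩
  rw [Finset.sum_congr rfl fun l _ => hterm l, Finset.sum_ite_eq' Finset.univ (j - 1)]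
  simp [Matrix.one_apply, sub_add_cancel, eq_comm]

lemma PQ_comm (hζm : ζ ^ m = 1) : P0 m ζ * Q0 m = ζ • (Q0 m * P0 m ζ) := by
  ext j k
  rw [P0, Q0, Matrix.diagonal_mul, Matrix.smul_apply, Matrix.mul_diagonal]
  simp only [Matrix.of_apply]
  by_cases hjk : j = k + 1
  · rw [if_pos hjk, hjk]
    have hval : ((k + 1 : Fin m) : ℕ) = ((k : ℕ) + 1) % m := by
      rw [Fin.val_add, Fin.val_one', Nat.add_mod_mod]
    rw [hval, pow_mod hζm, pow_succ, smul_eq_mul]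
    ring
  · rw [if_neg hjk]
    simp

open Fin.NatCast in
lemma centralizer (hζ : IsPrimitiveRoot ζ m) (g : Matrix (Fin m) (Fin m) ℂ)
    (h1 : g * P0 m ζ = P0 m ζ * g) (h2 : g * Q0 m = Q0 m * g) :
    ∃ ω : ℂ, g = ω • (1 : Matrix (Fin m) (Fin m) ℂ) := by
  have hdiag : ∀ j k : Fin m, j ≠ k → g j k = 0 := by
    intro j k hjk
    have e1 := congrArg (fun M => M j k) h1
    simp only [P0, Matrix.mul_diagonal, Matrix.diagonal_mul] at e1
    by_contra hg
    have hkj : ζ ^ (k : ℕ) = ζ ^ (j : ℕ) := by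
      have e2 : g j k * ζ ^ (k : ℕ) = g j k * ζ ^ (j : ℕ) := by
        rw [e1]; ring
      exact mul_left_cancel₀ hg e2
    exact hjk ((Fin.ext (hζ.pow_inj k.2 j.2 hkj)).symm)
  have hconst : ∀ k : Fin m, g (k + 1) (k + 1) = g k k := by
    intro k
    have e1 := congrArg (fun M => M (k + 1) k) h2
    simp only [Q0, Matrix.mul_apply, Matrix.of_apply, mul_ite, mul_one, mul_zero, ite_mul,
      one_mul, zero_mul] at e1
    have hcond : ∀ l : Fin m, (k + 1 = l + 1) = (k = l) := by
      intro l
      exact propext ⟨fun hh => add_right_cancel hh, fun hh => by rw [hh]⟩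
    rw [Finset.sum_ite_eq' Finset.univ (k + 1) (g (k + 1))] at e1
    simp only [hcond] at e1
    rw [Finset.sum_ite_eq Finset.univ k (fun l => g l k)] at e1
    simpa using e1
  have hdiag_all : ∀ k : Fin m, g k k = g 0 0 := by
    have hnat : ∀ t : ℕ, g (t : Fin m) (t : Fin m) = g 0 0 := by
      intro t
      induction t with
      | zero => norm_num
      | succ t iht =>
        have hcast : ((t + 1 : ℕ) : Fin m) = (t : Fin m) + 1 := by push_cast; ring
        rw [hcast, hconst, iht]
    intro k
    have := hnat (k : ℕ)
    rwa [Fin.cast_val_eq_self] at this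
  refine ⟨g 0 0, ?_⟩
  ext j k
  by_cases hjk : j = k
  · subst hjk
    simp [Matrix.smul_apply, Matrix.one_apply, hdiag_all j]
  · simp [Matrix.smul_apply, Matrix.one_apply, hjk, hdiag j k hjk]

end BFM2b


open Kronecker BFM BFM2 BFM2b
open scoped Matrix

/-- Borel–Friedman–Morgan's Proposition 4.2.1 for `K = U(n)`: if `ζ` has exact order
`m`, `n = h·m`, and `a, b ∈ U(n)` satisfy `a b a⁻¹ b⁻¹ = ζ·Iₙ`, then the pair `(a,b)`
is conjugate in `U(n)` to a pair `(d₁ ⊗ P, d₂ ⊗ Q)` where `d₁, d₂ ∈ U(h)` are diagonal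
and `(P,Q)` is a pair in `U(m)` with commutator `ζ·Iₘ` whose centralizer in `U(m)`
consists exactly of the unitary scalar matrices. -/
theorem unitary_pair_conjugate_to_kronecker
    (m h : ℕ) (ζ : ℂ) (hζ : IsPrimitiveRoot ζ m)
    (a b : Matrix.unitaryGroup (Fin (h * m)) ℂ)
    (hab : ((a * b * a⁻¹ * b⁻¹ : Matrix.unitaryGroup (Fin (h * m)) ℂ) :
        Matrix (Fin (h * m)) (Fin (h * m)) ℂ)
        = ζ • (1 : Matrix (Fin (h * m)) (Fin (h * m)) ℂ)) :
    ∃ (u : Matrix.unitaryGroup (Fin (h * m)) ℂ)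
      (d₁ d₂ : Matrix.unitaryGroup (Fin h) ℂ)
      (P Q : Matrix.unitaryGroup (Fin m) ℂ),
      (d₁ : Matrix (Fin h) (Fin h) ℂ).IsDiag ∧
      (d₂ : Matrix (Fin h) (Fin h) ℂ).IsDiag ∧
      ((P * Q * P⁻¹ * Q⁻¹ : Matrix.unitaryGroup (Fin m) ℂ) : Matrix (Fin m) (Fin m) ℂ)
        = ζ • (1 : Matrix (Fin m) (Fin m) ℂ) ∧
      (∀ g : Matrix.unitaryGroup (Fin m) ℂ,
        (g * P = P * g ∧ g * Q = Q * g) ↔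
        ∃ ω : ℂ, (g : Matrix (Fin m) (Fin m) ℂ) = ω • (1 : Matrix (Fin m) (Fin m) ℂ)) ∧
      ((u * a * u⁻¹ : Matrix.unitaryGroup (Fin (h * m)) ℂ) :
          Matrix (Fin (h * m)) (Fin (h * m)) ℂ)
        = Matrix.reindex finProdFinEquiv finProdFinEquiv
            ((d₁ : Matrix (Fin h) (Fin h) ℂ) ⊗ₖ (P : Matrix (Fin m) (Fin m) ℂ)) ∧
      ((u * b * u⁻¹ : Matrix.unitaryGroup (Fin (h * m)) ℂ) :
          Matrix (Fin (h * m)) (Fin (h * m)) ℂ)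
        = Matrix.reindex finProdFinEquiv finProdFinEquiv
            ((d₂ : Matrix (Fin h) (Fin h) ℂ) ⊗ₖ (Q : Matrix (Fin m) (Fin m) ℂ)) := by
  rcases Nat.eq_zero_or_pos m with hm0 | hm
  · -- degenerate case `m = 0`
    subst hm0
    refine ⟨1, 1, 1, 1, 1, Matrix.isDiag_one, Matrix.isDiag_one, ?_, ?_, ?_, ?_⟩
    · ext i j; exact absurd i.2 (Nat.not_lt_zero _)
    · intro g
      constructor
      · intro _
        exact ⟨0, by ext i j; exact absurd i.2 (Nat.not_lt_zero _)⟩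
      · intro _
        constructor <;> (apply Subtype.ext; ext i j; exact absurd i.2 (Nat.not_lt_zero _))
    · ext i j; exact absurd i.2 (by simp)
    · ext i j; exact absurd i.2 (by simp)
  · -- main case
    haveI : NeZero m := ⟨hm.ne'⟩
    have hζm : ζ ^ m = 1 := hζ.pow_eq_one
    have hζnorm : ‖ζ‖ = 1 := norm_eq_one_of_pow hζm hm
    set A : Matrix (Fin (h * m)) (Fin (h * m)) ℂ := (a : Matrix (Fin (h * m)) (Fin (h * m)) ℂ) with hA
    set B : Matrix (Fin (h * m)) (Fin (h * m)) ℂ := (b : Matrix (Fin (h * m)) (Fin (h * m)) ℂ) with hB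
    -- the commutation relation at the matrix level
    have hcomm : A * B = ζ • (B * A) := by
      have hgrp : (a * b * a⁻¹ * b⁻¹) * (b * a) = a * b := by group
      have h0 := congrArg (Subtype.val) hgrp
      rw [MulMemClass.coe_mul, hab, MulMemClass.coe_mul, MulMemClass.coe_mul] at h0
      rw [← h0, smul_mul_assoc, one_mul]
    -- pass to linear maps on Euclidean space
    set V := EuclideanSpace ℂ (Fin (h * m)) with hV
    set T : V →ₗ[ℂ] V := Matrix.toEuclideanLin A with hT
    set S : V →ₗ[ℂ] V := Matrix.toEuclideanLin B with hS
    have hTapp : ∀ (x : V) (r : Fin (h * m)), T x r = (A *ᵥ (fun i => x i)) r :=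
      fun x r => rfl
    have hSapp : ∀ (x : V) (r : Fin (h * m)), S x r = (B *ᵥ (fun i => x i)) r :=
      fun x r => rfl
    have hinner : ∀ (M : Matrix (Fin (h * m)) (Fin (h * m)) ℂ),
        star M * M = 1 → ∀ x y : V,
        (∑ r, (starRingEnd ℂ) ((M *ᵥ (fun i => x i)) r) * (M *ᵥ (fun i => y i)) r)
          = ∑ r, (starRingEnd ℂ) (x r) * y r := by
      intro M hM x y
      have key : star (M *ᵥ (fun i => x i)) ⬝ᵥ (M *ᵥ (fun i => y i))
          = star (fun i => x i) ⬝ᵥ (fun i => y i) := by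
        rw [Matrix.star_mulVec, Matrix.dotProduct_mulVec, Matrix.vecMul_vecMul,
          ← Matrix.star_eq_conjTranspose, hM, Matrix.vecMul_one]
      simpa [dotProduct, Pi.star_apply, Complex.star_def] using key
    have hTinner : ∀ x y : V, ⟪T x, T y⟫ = ⟪x, y⟫ := by
      intro x y
      rw [PiLp.inner_apply, PiLp.inner_apply]
      simp only [RCLike.inner_apply, hTapp]
      simpa only [mul_comm] using hinner A (Matrix.mem_unitaryGroup_iff'.mp a.2) x y
    have hSinner : ∀ x y : V, ⟪S x, S y⟫ = ⟪x, y⟫ := by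
      intro x y
      rw [PiLp.inner_apply, PiLp.inner_apply]
      simp only [RCLike.inner_apply, hSapp]
      simpa only [mul_comm] using hinner B (Matrix.mem_unitaryGroup_iff'.mp b.2) x y
    have hTSrel : ∀ x : V, T (S x) = ζ • S (T x) := by
      intro x
      ext r
      have h1 : T (S x) r = (A *ᵥ (B *ᵥ (fun i => x i))) r := hTapp _ r
      have h2 : (ζ • S (T x)) r = ζ * (B *ᵥ (A *ᵥ (fun i => x i))) r := rfl
      rw [h1, h2, Matrix.mulVec_mulVec, Matrix.mulVec_mulVec, hcomm,
        Matrix.smul_mulVec, Pi.smul_apply, smul_eq_mul]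
    have hdim : Module.finrank ℂ V = h * m := finrank_euclideanSpace_fin
    obtain ⟨e, μ, β, heon, hμ, hβ, hTe, hSe⟩ :=
      keyLemma m ζ hζ h V T S hdim hTinner hSinner hTSrel
    -- the change-of-basis matrix whose columns are the `e p`
    set σ : Fin (h * m) ≃ Fin h × Fin m := (finProdFinEquiv (m := h) (n := m)).symm with hσ
    set C : Matrix (Fin (h * m)) (Fin (h * m)) ℂ := Matrix.of fun r s => e (σ s) r with hC
    have hCmem : C ∈ Matrix.unitaryGroup (Fin (h * m)) ℂ := by
      rw [Matrix.mem_unitaryGroup_iff']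
      ext s t
      have hip := heon (σ s) (σ t)
      rw [PiLp.inner_apply] at hip
      simp only [RCLike.inner_apply] at hip
      have hL : (star C * C) s t = ∑ r, (starRingEnd ℂ) (e (σ s) r) * e (σ t) r := by
        simp [Matrix.mul_apply, Matrix.star_apply, hC, Complex.star_def]
      simp only [mul_comm] at hip hL
      rw [hL, hip, Matrix.one_apply]
      congr 1
      simp only [eq_iff_iff]
      constructor
      · intro hst; exact (finProdFinEquiv (m := h) (n := m)).symm.injective hst
      · intro hst; rw [hst]
    -- the two key intertwining identities
    have hACd : A * C = C * (Matrix.reindex finProdFinEquiv finProdFinEquiv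
        ((Matrix.diagonal μ) ⊗ₖ P0 m ζ)) := by
      ext r s
      rw [Matrix.mul_apply, Matrix.mul_apply]
      have hRHS : ∀ t, C r t * (Matrix.reindex finProdFinEquiv finProdFinEquiv
          ((Matrix.diagonal μ) ⊗ₖ P0 m ζ)) t s
          = e (σ t) r * (Matrix.diagonal μ (σ t).1 (σ s).1 *
              Matrix.diagonal (fun j : Fin m => ζ ^ (j : ℕ)) (σ t).2 (σ s).2) := by
        intro t
        rw [Matrix.reindex_apply, Matrix.submatrix_apply, Matrix.kroneckerMap_apply]
        rfl
      have hzero : ∀ t ∈ (Finset.univ : Finset (Fin (h * m))), t ≠ s →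
          e (σ t) r * (Matrix.diagonal μ (σ t).1 (σ s).1 *
            Matrix.diagonal (fun j : Fin m => ζ ^ (j : ℕ)) (σ t).2 (σ s).2) = 0 := by
        intro t _ hts
        have hPQ : ¬((σ t).1 = (σ s).1 ∧ (σ t).2 = (σ s).2) := by
          rintro ⟨h1', h2'⟩
          exact hts (σ.injective (Prod.ext h1' h2'))
        rcases not_and_or.mp hPQ with hbad | hbad
        · rw [Matrix.diagonal_apply_ne _ hbad]; ring
        · rw [Matrix.diagonal_apply_ne _ hbad]; ring
      rw [Finset.sum_congr rfl fun t _ => hRHS t,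
        Finset.sum_eq_single s hzero (fun hs => absurd (Finset.mem_univ s) hs)]
      rw [Matrix.diagonal_apply_eq, Matrix.diagonal_apply_eq]
      have hLHS : ∑ t, A r t * C t s = T (e (σ s)) r := by
        rw [hTapp]
        simp [Matrix.mulVec, dotProduct, hC]
      rw [hLHS]
      have h5 := hTe (σ s).1 (σ s).2
      rw [Prod.mk.eta] at h5
      rw [h5]
      have h5' : ((μ (σ s).1 * ζ ^ (((σ s).2 : Fin m) : ℕ)) • e (σ s)) r
          = (μ (σ s).1 * ζ ^ (((σ s).2 : Fin m) : ℕ)) * e (σ s) r := rfl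
      rw [h5']
      ring
    have hBCd : B * C = C * (Matrix.reindex finProdFinEquiv finProdFinEquiv
        ((Matrix.diagonal β) ⊗ₖ Q0 m)) := by
      ext r s
      rw [Matrix.mul_apply, Matrix.mul_apply]
      have hRHS : ∀ t, C r t * (Matrix.reindex finProdFinEquiv finProdFinEquiv
          ((Matrix.diagonal β) ⊗ₖ Q0 m)) t s
          = e (σ t) r * (Matrix.diagonal β (σ t).1 (σ s).1 *
              (if (σ t).2 = (σ s).2 + 1 then (1 : ℂ) else 0)) := by
        intro t
        rw [Matrix.reindex_apply, Matrix.submatrix_apply, Matrix.kroneckerMap_apply]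
        rfl
      rw [Finset.sum_congr rfl fun t _ => hRHS t]
      have hσt0 : σ (σ.symm ((σ s).1, (σ s).2 + 1)) = ((σ s).1, (σ s).2 + 1) :=
        σ.apply_symm_apply _
      have hzero : ∀ t ∈ (Finset.univ : Finset (Fin (h * m))), t ≠ σ.symm ((σ s).1, (σ s).2 + 1) →
          e (σ t) r * (Matrix.diagonal β (σ t).1 (σ s).1 *
            (if (σ t).2 = (σ s).2 + 1 then (1 : ℂ) else 0)) = 0 := by
        intro t _ hts
        have hPQ : ¬((σ t).1 = (σ s).1 ∧ (σ t).2 = (σ s).2 + 1) := by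
          rintro ⟨h1', h2'⟩
          apply hts
          have h7 : σ t = ((σ s).1, (σ s).2 + 1) := Prod.ext h1' h2'
          have h8 := congrArg σ.symm h7
          rwa [Equiv.symm_apply_apply] at h8
        rcases not_and_or.mp hPQ with hbad | hbad
        · rw [Matrix.diagonal_apply_ne _ hbad]; ring
        · rw [if_neg hbad]; ring
      simp only [hRHS]
      rw [Finset.sum_eq_single (σ.symm ((σ s).1, (σ s).2 + 1)) hzero
          (fun hs => absurd (Finset.mem_univ _) hs)]
      rw [hσt0]
      simp only [Matrix.diagonal_apply_eq, if_pos rfl]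
      have hLHS : ∑ t, B r t * C t s = S (e (σ s)) r := by
        rw [hSapp]
        simp [Matrix.mulVec, dotProduct, hC]
      rw [hLHS]
      have h6 := hSe (σ s).1 (σ s).2
      rw [Prod.mk.eta] at h6
      rw [h6]
      have h6' : (β (σ s).1 • e ((σ s).1, (σ s).2 + 1)) r
          = β (σ s).1 * e ((σ s).1, (σ s).2 + 1) r := rfl
      rw [h6']
      simp [mul_comm]
    -- package everything up
    have hP0norm : ∀ j : Fin m, ‖ζ ^ (j : ℕ)‖ = 1 := by
      intro j; rw [norm_pow, hζnorm, one_pow]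
    set c : Matrix.unitaryGroup (Fin (h * m)) ℂ := ⟨C, hCmem⟩ with hc
    set Pu : Matrix.unitaryGroup (Fin m) ℂ := ⟨P0 m ζ, diag_mem _ hP0norm⟩ with hPu
    set Qu : Matrix.unitaryGroup (Fin m) ℂ := ⟨Q0 m, Q0_mem⟩ with hQu
    refine ⟨c⁻¹, ⟨Matrix.diagonal μ, diag_mem μ hμ⟩, ⟨Matrix.diagonal β, diag_mem β hβ⟩,
      Pu, Qu, Matrix.isDiag_diagonal μ, Matrix.isDiag_diagonal β, ?_, ?_, ?_, ?_⟩
    · -- commutator of P and Q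
      set z : Matrix.unitaryGroup (Fin m) ℂ := Qu * Pu with hz
      set X : Matrix.unitaryGroup (Fin m) ℂ := Pu * Qu * Pu⁻¹ * Qu⁻¹ with hX
      have hgrp : X * z = Pu * Qu := by rw [hX, hz]; group
      have hz1 : (z : Matrix (Fin m) (Fin m) ℂ) * ((z⁻¹ : Matrix.unitaryGroup (Fin m) ℂ) :
          Matrix (Fin m) (Fin m) ℂ) = 1 := by
        rw [← MulMemClass.coe_mul, mul_inv_cancel, OneMemClass.coe_one]
      have hXz : (X : Matrix (Fin m) (Fin m) ℂ) * (z : Matrix (Fin m) (Fin m) ℂ)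
          = ζ • (z : Matrix (Fin m) (Fin m) ℂ) := by
        have h0 := congrArg (Subtype.val) hgrp
        rw [MulMemClass.coe_mul] at h0
        rw [h0, MulMemClass.coe_mul, hz, MulMemClass.coe_mul]
        exact PQ_comm hζm
      calc (X : Matrix (Fin m) (Fin m) ℂ)
          = (X : Matrix (Fin m) (Fin m) ℂ) * ((z : Matrix (Fin m) (Fin m) ℂ)
            * ((z⁻¹ : Matrix.unitaryGroup (Fin m) ℂ) : Matrix (Fin m) (Fin m) ℂ)) := by
            rw [hz1, mul_one]
        _ = ((X : Matrix (Fin m) (Fin m) ℂ) * (z : Matrix (Fin m) (Fin m) ℂ))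
            * ((z⁻¹ : Matrix.unitaryGroup (Fin m) ℂ) : Matrix (Fin m) (Fin m) ℂ) := by
            rw [mul_assoc]
        _ = (ζ • (z : Matrix (Fin m) (Fin m) ℂ))
            * ((z⁻¹ : Matrix.unitaryGroup (Fin m) ℂ) : Matrix (Fin m) (Fin m) ℂ) := by
            rw [hXz]
        _ = ζ • ((z : Matrix (Fin m) (Fin m) ℂ)
            * ((z⁻¹ : Matrix.unitaryGroup (Fin m) ℂ) : Matrix (Fin m) (Fin m) ℂ)) := by
            rw [smul_mul_assoc]
        _ = ζ • (1 : Matrix (Fin m) (Fin m) ℂ) := by rw [hz1]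
    · -- centralizer condition
      intro g
      constructor
      · rintro ⟨hgP, hgQ⟩
        have h1 := congrArg (Subtype.val) hgP
        have h2 := congrArg (Subtype.val) hgQ
        rw [MulMemClass.coe_mul, MulMemClass.coe_mul] at h1 h2
        exact centralizer hζ (g : Matrix _ _ ℂ) h1 h2
      · rintro ⟨ω, hω⟩
        constructor <;>
          (apply Subtype.ext
           rw [MulMemClass.coe_mul, MulMemClass.coe_mul, hω, smul_mul_assoc, one_mul,
             mul_smul_comm, mul_one])
    · -- conjugating a
      have h0 : c⁻¹ * a * c⁻¹⁻¹ = c⁻¹ * (a * c) := by rw [inv_inv, mul_assoc]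
      have hcC : (c : Matrix (Fin (h * m)) (Fin (h * m)) ℂ) = C := rfl
      rw [h0, MulMemClass.coe_mul, MulMemClass.coe_mul, hcC]
      show (c⁻¹ : Matrix.unitaryGroup (Fin (h * m)) ℂ).val * (A * C) = _
      rw [hACd, ← mul_assoc, ← hcC, ← MulMemClass.coe_mul, inv_mul_cancel,
        OneMemClass.coe_one, one_mul]
    · -- conjugating b
      have h0 : c⁻¹ * b * c⁻¹⁻¹ = c⁻¹ * (b * c) := by rw [inv_inv, mul_assoc]
      have hcC : (c : Matrix (Fin (h * m)) (Fin (h * m)) ℂ) = C := rfl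
      rw [h0, MulMemClass.coe_mul, MulMemClass.coe_mul, hcC]
      show (c⁻¹ : Matrix.unitaryGroup (Fin (h * m)) ℂ).val * (B * C) = _
      rw [hBCd, ← mul_assoc, ← hcC, ← MulMemClass.coe_mul, inv_mul_cancel,
        OneMemClass.coe_one, one_mul]
end
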